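/- arXiv:1508.05847 — 6 statements merged into one kernel-verified Lean document; each statement's English description precedes it below -/
import Mathlib

section
/- For every real number x ≥ 0 and every integer j ≥ 0, the doubly infinite series ∑_{n∈ℤ} e^{−2x} I_{|n|}(2x) n^{2j} converges and satisfies ∑_{n∈ℤ} e^{−2x} I_{|n|}(2x) n^{2j} ≤ ((4j)!/(2j)!) · max(x^j, 1). (Proposition 'bessel.moment' of the paper.) -/
/-- The modified Bessel function of the first kind of nonnegative integer order `n`,
defined by the everywhere-convergent series
`I_n(x) = ∑_{j=0}^∞ (x/2)^(2j+n) / (j! (j+n)!)`. -/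
noncomputable def besselI (n : ℕ) (x : ℝ) : ℝ :=
  ∑' j : ℕ, (x / 2) ^ (2 * j + n) / ((Nat.factorial j : ℝ) * (Nat.factorial (j + n) : ℝ))

open Real

namespace BesselAux

lemma tsum_exp (c : ℝ) : ∑' n : ℕ, c ^ n / (Nat.factorial n : ℝ) = Real.exp c := by
  rw [Real.exp_eq_exp_ℝ, NormedSpace.exp_eq_tsum_div]

lemma summable_exp (c : ℝ) : Summable (fun n : ℕ => c ^ n / (Nat.factorial n : ℝ)) :=
  Real.summable_pow_div_factorial c

lemma summable_prodexp (c d : ℝ) (hc : 0 ≤ c) (hd : 0 ≤ d) :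
    Summable (fun p : ℕ × ℕ =>
      c ^ p.1 / (Nat.factorial p.1 : ℝ) * (d ^ p.2 / (Nat.factorial p.2 : ℝ))) :=
  (summable_exp c).mul_of_nonneg (summable_exp d)
    (fun a => by positivity) (fun b => by positivity)

lemma tsum_prodexp (c d : ℝ) :
    ∑' p : ℕ × ℕ, c ^ p.1 / (Nat.factorial p.1 : ℝ) * (d ^ p.2 / (Nat.factorial p.2 : ℝ))
      = Real.exp c * Real.exp d := by
  have h1 : Summable fun n : ℕ => ‖c ^ n / (Nat.factorial n : ℝ)‖ :=
    (summable_exp |c|).congr fun n => by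
      rw [Real.norm_eq_abs, abs_div, abs_pow, Nat.abs_cast]
  have h2 : Summable fun n : ℕ => ‖d ^ n / (Nat.factorial n : ℝ)‖ :=
    (summable_exp |d|).congr fun n => by
      rw [Real.norm_eq_abs, abs_div, abs_pow, Nat.abs_cast]
  rw [← tsum_exp c, ← tsum_exp d]
  exact (tsum_mul_tsum_of_summable_norm h1 h2).symm

lemma fac_ineq (j : ℕ) :
    Nat.factorial (2*j) * Nat.factorial (2*j) * 4 ^ j ≤ Nat.factorial (4*j) := by
  induction j with
  | zero => simp
  | succ j ih =>
    have h2 : Nat.factorial (2*(j+1)) = (2*j+2) * ((2*j+1) * Nat.factorial (2*j)) := by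
      rw [show 2*(j+1) = (2*j+1)+1 by ring, Nat.factorial_succ, Nat.factorial_succ]
    have h4 : Nat.factorial (4*(j+1)) =
        (4*j+4) * ((4*j+3) * ((4*j+2) * ((4*j+1) * Nat.factorial (4*j)))) := by
      rw [show 4*(j+1) = (4*j+3)+1 by ring, Nat.factorial_succ,
        show 4*j+3 = (4*j+2)+1 by ring, Nat.factorial_succ,
        show 4*j+2 = (4*j+1)+1 by ring, Nat.factorial_succ,
        show 4*j+1 = (4*j)+1 by ring, Nat.factorial_succ]
    rw [h2, h4]
    calc (2*j+2) * ((2*j+1) * Nat.factorial (2*j)) * ((2*j+2) * ((2*j+1) * Nat.factorial (2*j)))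
        * 4 ^ (j+1)
        = (4 * ((2*j+2)*(2*j+1)*((2*j+2)*(2*j+1)))) *
          (Nat.factorial (2*j) * Nat.factorial (2*j) * 4 ^ j) := by ring
      _ ≤ ((4*j+4) * ((4*j+3) * ((4*j+2) * (4*j+1)))) * Nat.factorial (4*j) := by
          refine Nat.mul_le_mul ?_ ih
          have hexp : (4*j+4) * ((4*j+3) * ((4*j+2) * (4*j+1)))
              = 4 * ((2*j+2)*(2*j+1)*((2*j+2)*(2*j+1)))
                + 8*(j+1)*(2*j+1)*(12*j^2+10*j+1) := by ring
          rw [hexp]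
          exact Nat.le_add_right _ _
      _ = (4*j+4) * ((4*j+3) * ((4*j+2) * ((4*j+1) * Nat.factorial (4*j)))) := by ring

lemma pow_le_cosh (v : ℝ) (j : ℕ) :
    v ^ (2*j) ≤ (Nat.factorial (2*j) : ℝ) / 2 * (Real.exp v + Real.exp (-v)) := by
  have hs1 := summable_exp v
  have hs2 := summable_exp (-v)
  have hadd : Summable (fun n : ℕ => v^n/(Nat.factorial n : ℝ) + (-v)^n/(Nat.factorial n : ℝ)) :=
    hs1.add hs2
  have hnonneg : ∀ n : ℕ, 0 ≤ v^n/(Nat.factorial n : ℝ) + (-v)^n/(Nat.factorial n : ℝ) := by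
    intro n
    rcases Nat.even_or_odd n with he | ho
    · rw [he.neg_pow]
      obtain ⟨m, hm⟩ := he
      have : (0:ℝ) ≤ v ^ n := by
        rw [hm, show m + m = 2*m by ring, pow_mul]; positivity
      positivity
    · rw [ho.neg_pow, neg_div, add_neg_cancel]
  have hkey := Summable.le_tsum hadd (2*j) (fun n _ => hnonneg n)
  rw [Summable.tsum_add hs1 hs2, tsum_exp, tsum_exp] at hkey
  rw [(even_two_mul j).neg_pow] at hkey
  have hfac : (0:ℝ) < (Nat.factorial (2*j) : ℝ) := by
    exact_mod_cast Nat.factorial_pos _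
  have : v ^ (2*j) = (Nat.factorial (2*j) : ℝ) / 2 *
      (v^(2*j)/(Nat.factorial (2*j) : ℝ) + v^(2*j)/(Nat.factorial (2*j) : ℝ)) := by
    field_simp
    ring
  rw [this]
  exact mul_le_mul_of_nonneg_left hkey (by positivity)

lemma pow_le_exp_pair (u t : ℝ) (ht : 0 < t) (j : ℕ) :
    u ^ (2*j) ≤ (Nat.factorial (2*j) : ℝ) / (2 * t ^ (2*j)) *
      (Real.exp (t*u) + Real.exp (-(t*u))) := by
  have h := pow_le_cosh (t*u) j
  rw [mul_pow] at h
  have ht2 : (0:ℝ) < t ^ (2*j) := pow_pos ht _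
  rw [div_mul_eq_mul_div, le_div_iff₀ (by positivity)]
  nlinarith [h]

lemma prod_id (x s : ℝ) (a b : ℕ) :
    (x*Real.exp s)^a/(Nat.factorial a : ℝ) * ((x*Real.exp (-s))^b/(Nat.factorial b : ℝ))
      = x^(a+b)/((Nat.factorial a : ℝ)*(Nat.factorial b : ℝ)) * Real.exp (s*((a:ℝ)-b)) := by
  rw [mul_pow, mul_pow, ← Real.exp_nat_mul, ← Real.exp_nat_mul,
    show s*((a:ℝ)-b) = a*s + b*(-s) by ring, Real.exp_add, pow_add]
  have ha : (0:ℝ) < (Nat.factorial a : ℝ) := by exact_mod_cast Nat.factorial_pos _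
  have hb : (0:ℝ) < (Nat.factorial b : ℝ) := by exact_mod_cast Nat.factorial_pos _
  field_simp


def pairEquiv : ℤ × ℕ ≃ ℕ × ℕ where
  toFun p := (p.2 + p.1.toNat, p.2 + (-p.1).toNat)
  invFun q := ((q.1 : ℤ) - q.2, min q.1 q.2)
  left_inv := by rintro ⟨n, k⟩; simp only [Prod.mk.injEq]; constructor <;> omega
  right_inv := by rintro ⟨a, b⟩; simp only [Prod.mk.injEq]; constructor <;> omega

noncomputable def G (x : ℝ) (j : ℕ) (p : ℕ × ℕ) : ℝ :=
  Real.exp (-(2*x)) *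
    (x^(p.1+p.2) / ((Nat.factorial p.1 : ℝ) * (Nat.factorial p.2 : ℝ))) *
    ((p.1:ℝ) - (p.2:ℝ))^(2*j)

lemma G_nonneg (x : ℝ) (hx : 0 ≤ x) (j : ℕ) (p : ℕ × ℕ) : 0 ≤ G x j p := by
  unfold G
  have h : (0:ℝ) ≤ ((p.1:ℝ) - p.2)^(2*j) := by rw [pow_mul]; positivity
  have h2 : (0:ℝ) ≤ x^(p.1+p.2) / ((Nat.factorial p.1 : ℝ) * (Nat.factorial p.2 : ℝ)) := by
    positivity
  have h3 : (0:ℝ) ≤ Real.exp (-(2*x)) := (Real.exp_pos _).le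
  exact mul_nonneg (mul_nonneg h3 h2) h

lemma core (x : ℝ) (hx : 0 ≤ x) (j : ℕ) (t : ℝ) (ht : 0 < t) :
    Summable (G x j) ∧
    ∑' p, G x j p ≤ (Nat.factorial (2*j) : ℝ) / t^(2*j) *
      Real.exp (x * (Real.exp t + Real.exp (-t) - 2)) := by
  set c := x * Real.exp t with hcdef
  set d := x * Real.exp (-t) with hddef
  have hc : 0 ≤ c := mul_nonneg hx (Real.exp_pos _).le
  have hd : 0 ≤ d := mul_nonneg hx (Real.exp_pos _).le
  set K : ℝ := (Nat.factorial (2*j) : ℝ)/(2*t^(2*j)) with hKdef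
  have hK : 0 ≤ K := by positivity
  set M : ℕ × ℕ → ℝ := fun p => Real.exp (-(2*x)) * K *
    (c^p.1/(Nat.factorial p.1 : ℝ) * (d^p.2/(Nat.factorial p.2 : ℝ)) +
     d^p.1/(Nat.factorial p.1 : ℝ) * (c^p.2/(Nat.factorial p.2 : ℝ))) with hMdef
  have hGM : ∀ p, G x j p ≤ M p := by
    rintro ⟨a, b⟩
    have hb := pow_le_exp_pair ((a:ℝ) - b) t ht j
    have h1 := prod_id x t a b
    have h2 := prod_id x (-t) a b
    rw [neg_neg] at h2
    have hM : M (a,b) = Real.exp (-(2*x)) *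
        (x^(a+b) / ((Nat.factorial a : ℝ) * (Nat.factorial b : ℝ))) *
        (K * (Real.exp (t*((a:ℝ)-b)) + Real.exp (-(t*((a:ℝ)-b))))) := by
      simp only [hMdef]
      rw [h1, h2, show (-t)*((a:ℝ)-b) = -(t*((a:ℝ)-b)) by ring]
      ring
    rw [hM]
    refine mul_le_mul_of_nonneg_left ?_ (by positivity)
    simpa [hKdef] using hb
  have hS1 := summable_prodexp c d hc hd
  have hS2 := summable_prodexp d c hd hc
  have hMsum : Summable M := ((hS1.add hS2).mul_left _)
  have hGsum : Summable (G x j) :=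
    Summable.of_nonneg_of_le (G_nonneg x hx j) hGM hMsum
  refine ⟨hGsum, ?_⟩
  have htsumM : ∑' p, M p = (Nat.factorial (2*j) : ℝ) / t^(2*j) *
      Real.exp (x * (Real.exp t + Real.exp (-t) - 2)) := by
    simp only [hMdef]
    rw [tsum_mul_left, Summable.tsum_add hS1 hS2, tsum_prodexp, tsum_prodexp]
    have hexp : Real.exp (x * (Real.exp t + Real.exp (-t) - 2))
        = Real.exp (-(2*x)) * (Real.exp c * Real.exp d) := by
      rw [← Real.exp_add, ← Real.exp_add]
      congr 1
      rw [hcdef, hddef]; ring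
    rw [hexp, hKdef]
    have ht0 : t^(2*j) ≠ 0 := by positivity
    field_simp
    ring
  calc ∑' p, G x j p ≤ ∑' p, M p := Summable.tsum_le_tsum hGM hGsum hMsum
    _ = _ := htsumM

lemma core0 (x : ℝ) (hx : 0 ≤ x) : ∑' p, G x 0 p = 1 := by
  have hGeq : G x 0 = fun p : ℕ×ℕ => Real.exp (-(2*x)) *
      ((x^p.1/(Nat.factorial p.1 : ℝ)) * (x^p.2/(Nat.factorial p.2 : ℝ))) := by
    funext p
    simp only [G, Nat.mul_zero, pow_zero, mul_one, pow_add]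
    ring
  rw [hGeq, tsum_mul_left, tsum_prodexp, ← Real.exp_add, ← Real.exp_add,
    show -(2*x) + (x + x) = 0 by ring, Real.exp_zero]

lemma G_equiv (x : ℝ) (j : ℕ) (n : ℤ) (k : ℕ) :
    G x j (pairEquiv (n, k)) =
      Real.exp (-(2*x)) * (x^(2*k + n.natAbs) /
        ((Nat.factorial k : ℝ) * (Nat.factorial (k + n.natAbs) : ℝ))) * (n:ℝ)^(2*j) := by
  simp only [pairEquiv, Equiv.coe_fn_mk, G]
  set a := k + n.toNat with hadef
  set b := k + (-n).toNat with hbdef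
  have hsum : a + b = 2*k + n.natAbs := by omega
  have hdiff : ((a:ℝ) - b) = (n:ℝ) := by
    have hz : (a:ℤ) - (b:ℤ) = n := by omega
    have h := congrArg (fun z : ℤ => (z:ℝ)) hz
    push_cast at h
    linarith
  have hfac : (Nat.factorial a : ℝ) * (Nat.factorial b : ℝ)
      = (Nat.factorial k : ℝ) * (Nat.factorial (k + n.natAbs) : ℝ) := by
    have hcases : (a = k + n.natAbs ∧ b = k) ∨ (a = k ∧ b = k + n.natAbs) := by omega
    rcases hcases with ⟨h1,h2⟩|⟨h1,h2⟩ <;> rw [h1, h2] <;> ring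
  rw [hsum, hdiff, hfac]

lemma quad_bound {t : ℝ} (ht : 0 < t) (ht1 : t ≤ 1) :
    Real.exp t + Real.exp (-t) - 2 ≤ (2 * Real.log 2) * t^2 := by
  have h1 := Real.exp_bound (x := t) (by rw [abs_of_pos ht]; exact ht1) (n := 4) (by norm_num)
  have h2 := Real.exp_bound (x := -t) (by rw [abs_neg, abs_of_pos ht]; exact ht1)
    (n := 4) (by norm_num)
  rw [abs_of_pos ht] at h1
  rw [abs_neg, abs_of_pos ht] at h2
  have hsr : ∑ m ∈ Finset.range 4, t ^ m / (Nat.factorial m : ℝ)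
      = 1 + t + t^2/2 + t^3/6 := by
    norm_num [Finset.sum_range_succ, Nat.factorial]
  have hsr2 : ∑ m ∈ Finset.range 4, (-t) ^ m / (Nat.factorial m : ℝ)
      = 1 - t + t^2/2 - t^3/6 := by
    norm_num [Finset.sum_range_succ, Nat.factorial]
    ring
  rw [hsr] at h1
  rw [hsr2] at h2
  have e1 := (abs_sub_le_iff.1 h1).1
  have e2 := (abs_sub_le_iff.1 h2).1
  have hlog := Real.log_two_gt_d9
  have ht2 : t^2 ≤ 1 := by nlinarith
  have ht4 : t^4 ≤ t^2 := by nlinarith [mul_le_mul_of_nonneg_right ht2 (sq_nonneg t)]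
  norm_num [Nat.factorial] at e1 e2
  nlinarith [sq_nonneg t]



lemma exp_factor_le (x : ℝ) (hx : 0 ≤ x) (j : ℕ) {t : ℝ} (ht : 0 < t) (ht1 : t ≤ 1)
    (hxt : x * t^2 ≤ (j:ℝ)/2) :
    Real.exp (x * (Real.exp t + Real.exp (-t) - 2)) ≤ 2^j := by
  have hq := quad_bound ht ht1
  have hlog : 0 < Real.log 2 := Real.log_pos (by norm_num)
  have h1 : x * (Real.exp t + Real.exp (-t) - 2) ≤ x * ((2*Real.log 2) * t^2) :=
    mul_le_mul_of_nonneg_left hq hx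
  have h3 : (2*Real.log 2) * (x*t^2) ≤ (2*Real.log 2) * ((j:ℝ)/2) :=
    mul_le_mul_of_nonneg_left hxt (by positivity)
  have h5 : x * (Real.exp t + Real.exp (-t) - 2) ≤ (j:ℝ) * Real.log 2 := by
    nlinarith [h1, h3]
  calc Real.exp (x * (Real.exp t + Real.exp (-t) - 2))
      ≤ Real.exp ((j:ℝ) * Real.log 2) := Real.exp_le_exp.2 h5
    _ = 2^j := by rw [Real.exp_nat_mul, Real.exp_log (by norm_num : (0:ℝ) < 2)]

lemma facR (j : ℕ) : (Nat.factorial (2*j) : ℝ) * 4^j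
    ≤ (Nat.factorial (4*j) : ℝ)/(Nat.factorial (2*j) : ℝ) := by
  have hpos : (0:ℝ) < (Nat.factorial (2*j) : ℝ) := by exact_mod_cast Nat.factorial_pos _
  rw [le_div_iff₀ hpos]
  have hc : ((Nat.factorial (2*j) * Nat.factorial (2*j) * 4^j : ℕ) : ℝ)
      ≤ ((Nat.factorial (4*j) : ℕ) : ℝ) := by exact_mod_cast fac_ineq j
  push_cast at hc
  nlinarith [hc]

lemma tail_bound (x : ℝ) (hx : 0 ≤ x) (j : ℕ) (hj : 1 ≤ j) :
    ∃ t : ℝ, 0 < t ∧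
      (Nat.factorial (2*j) : ℝ) / t^(2*j) * Real.exp (x*(Real.exp t + Real.exp (-t) - 2))
        ≤ ((Nat.factorial (4*j) : ℝ)/(Nat.factorial (2*j) : ℝ)) * max (x^j) 1 := by
  have hD0 : (0:ℝ) ≤ (Nat.factorial (4*j) : ℝ)/(Nat.factorial (2*j) : ℝ) := by positivity
  have hfacpos : (0:ℝ) ≤ (Nat.factorial (2*j) : ℝ) := by positivity
  have hj1 : (1:ℝ) ≤ (j:ℝ) := by exact_mod_cast hj
  rcases le_or_gt (2*x) (j:ℝ) with hc | hc
  · refine ⟨1, one_pos, ?_⟩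
    have he := exp_factor_le x hx j one_pos le_rfl (by nlinarith)
    calc (Nat.factorial (2*j) : ℝ) / 1^(2*j) * Real.exp (x*(Real.exp 1 + Real.exp (-1) - 2))
        ≤ (Nat.factorial (2*j) : ℝ) * 2^j := by
          rw [one_pow, div_one]; exact mul_le_mul_of_nonneg_left he hfacpos
      _ ≤ (Nat.factorial (2*j) : ℝ) * 4^j := by
          refine mul_le_mul_of_nonneg_left ?_ hfacpos
          exact pow_le_pow_left₀ (by norm_num) (by norm_num) j
      _ ≤ (Nat.factorial (4*j) : ℝ)/(Nat.factorial (2*j) : ℝ) := facR j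
      _ ≤ ((Nat.factorial (4*j) : ℝ)/(Nat.factorial (2*j) : ℝ)) * max (x^j) 1 :=
          le_mul_of_one_le_right hD0 (le_max_right _ _)
  · have hx0 : 0 < x := by nlinarith
    set q := (j:ℝ)/(2*x) with hqdef
    have hq0 : 0 < q := by positivity
    have hq1 : q ≤ 1 := by rw [hqdef, div_le_one (by positivity)]; linarith
    refine ⟨Real.sqrt q, Real.sqrt_pos.2 hq0, ?_⟩
    have ht2 : Real.sqrt q ^ 2 = q := Real.sq_sqrt hq0.le
    have ht1 : Real.sqrt q ≤ 1 := by
      rw [show (1:ℝ) = Real.sqrt 1 by simp]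
      exact Real.sqrt_le_sqrt hq1
    have hxq : x * q = (j:ℝ)/2 := by
      rw [hqdef]; field_simp
    have hxt : x * Real.sqrt q ^ 2 ≤ (j:ℝ)/2 := by rw [ht2, hxq]
    have he := exp_factor_le x hx j (Real.sqrt_pos.2 hq0) ht1 hxt
    have htpow : Real.sqrt q ^ (2*j) = q^j := by rw [pow_mul, ht2]
    have hjp : (1:ℝ) ≤ (j:ℝ)^j := one_le_pow₀ hj1
    calc (Nat.factorial (2*j) : ℝ) / Real.sqrt q^(2*j) *
          Real.exp (x*(Real.exp (Real.sqrt q) + Real.exp (-Real.sqrt q) - 2))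
        ≤ (Nat.factorial (2*j) : ℝ) / q^j * 2^j := by
          rw [htpow]
          exact mul_le_mul_of_nonneg_left he (by positivity)
      _ = (Nat.factorial (2*j) : ℝ) * 4^j * x^j / (j:ℝ)^j := by
          rw [hqdef, div_pow]
          rw [div_div_eq_mul_div]
          field_simp
          rw [show (4:ℝ) = 2^2 by norm_num, ← pow_mul]
          ring
      _ ≤ (Nat.factorial (2*j) : ℝ) * 4^j * x^j := div_le_self (by positivity) hjp
      _ = ((Nat.factorial (2*j) : ℝ) * 4^j) * x^j := by ring
      _ ≤ ((Nat.factorial (4*j) : ℝ)/(Nat.factorial (2*j) : ℝ)) * x^j :=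
          mul_le_mul_of_nonneg_right (facR j) (by positivity)
      _ ≤ ((Nat.factorial (4*j) : ℝ)/(Nat.factorial (2*j) : ℝ)) * max (x^j) 1 :=
          mul_le_mul_of_nonneg_left (le_max_left _ _) hD0

end BesselAux


/-- Moment bound for the spectral measure of the SEP kernel: for `x ≥ 0` and `j ≥ 0`,
the series `∑_{n ∈ ℤ} e^{−2x} I_{|n|}(2x) n^{2j}` converges and is bounded by
`((4j)!/(2j)!) max(x^j, 1)`. -/
theorem besselI_moment (x : ℝ) (hx : 0 ≤ x) (j : ℕ) :
    Summable (fun n : ℤ => Real.exp (-(2 * x)) * besselI n.natAbs (2 * x) * (n : ℝ) ^ (2 * j)) ∧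
    ∑' n : ℤ, Real.exp (-(2 * x)) * besselI n.natAbs (2 * x) * (n : ℝ) ^ (2 * j) ≤
      ((Nat.factorial (4 * j) : ℝ) / (Nat.factorial (2 * j) : ℝ)) * max (x ^ j) 1 := by
  classical
  have hG : Summable (BesselAux.G x j) := (BesselAux.core x hx j 1 one_pos).1
  have hFs : Summable (fun p : ℤ × ℕ => BesselAux.G x j (BesselAux.pairEquiv p)) := by
    have := (BesselAux.pairEquiv.summable_iff (f := BesselAux.G x j)).2 hG
    exact this
  have hfun : ∀ n : ℤ, Real.exp (-(2 * x)) * besselI n.natAbs (2 * x) * (n : ℝ) ^ (2 * j)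
      = ∑' k : ℕ, BesselAux.G x j (BesselAux.pairEquiv (n, k)) := by
    intro n
    have hb : besselI n.natAbs (2*x) = ∑' k : ℕ, x^(2*k + n.natAbs) /
        ((Nat.factorial k : ℝ) * (Nat.factorial (k + n.natAbs) : ℝ)) := by
      simp only [besselI, show (2*x)/2 = x from by ring]
    rw [hb, mul_assoc, ← tsum_mul_right, ← tsum_mul_left]
    exact tsum_congr fun k => by rw [BesselAux.G_equiv]; ring
  have hsum : Summable (fun n : ℤ =>
      Real.exp (-(2 * x)) * besselI n.natAbs (2 * x) * (n : ℝ) ^ (2 * j)) := by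
    exact hFs.prod.congr fun n => (hfun n).symm
  refine ⟨hsum, ?_⟩
  have hts : ∑' n : ℤ, Real.exp (-(2 * x)) * besselI n.natAbs (2 * x) * (n : ℝ) ^ (2 * j)
      = ∑' q : ℕ × ℕ, BesselAux.G x j q := by
    calc ∑' n : ℤ, Real.exp (-(2 * x)) * besselI n.natAbs (2 * x) * (n : ℝ) ^ (2 * j)
        = ∑' (n : ℤ), ∑' (k : ℕ), BesselAux.G x j (BesselAux.pairEquiv (n, k)) :=
          tsum_congr hfun
      _ = ∑' p : ℤ × ℕ, BesselAux.G x j (BesselAux.pairEquiv p) := (Summable.tsum_prod hFs).symm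
      _ = _ := BesselAux.pairEquiv.tsum_eq (BesselAux.G x j)
  rw [hts]
  rcases Nat.eq_zero_or_pos j with hj0 | hj
  · subst hj0
    rw [BesselAux.core0 x hx]
    norm_num [Nat.factorial]
  · obtain ⟨t, ht, hbound⟩ := BesselAux.tail_bound x hx j hj
    exact le_trans (BesselAux.core x hx j t ht).2 hbound
end

section
/- For an integer n ≥ 0, define f_n(x) = √x · e^{−x} · I_n(x) for x ≥ 0. Then f_n is monotonically increasing on [0, n + 1/2] when n = 0 or n = 1, and f_n is monotonically increasing on all of [0, ∞) when n ≥ 2. (Proposition 'bessel.increasing' of the paper.) -/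
open Real Finset Filter

namespace BesselAux

noncomputable def bb (n j : ℕ) : ℝ :=
  (1 / 2 : ℝ) ^ (2 * j + n) / (Nat.factorial j * Nat.factorial (j + n))

lemma bb_pos (n j : ℕ) : 0 < bb n j := by
  apply div_pos (by positivity); positivity

lemma fact_pos (j : ℕ) : (0:ℝ) < Nat.factorial j := by exact_mod_cast Nat.factorial_pos j

lemma one_le_fact (j : ℕ) : (1:ℝ) ≤ Nat.factorial j := by
  exact_mod_cast Nat.one_le_iff_ne_zero.mpr (Nat.factorial_pos j).ne'

/-- master summability lemma -/
lemma summable_master (n : ℕ) {r : ℝ} (hr : 0 ≤ r) :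
    Summable (fun j : ℕ => (2 * j + n + 1 : ℝ) * r ^ (2 * j) /
      (Nat.factorial j * Nat.factorial (j + n))) := by
  refine Summable.of_nonneg_of_le (fun j => by positivity) (fun j => ?_)
    ((Real.summable_pow_div_factorial (4 * r ^ 2)).mul_left (n + 1 : ℝ))
  have h1 : (1 : ℝ) ≤ Nat.factorial (j + n) := one_le_fact _
  have h2 : (2 * j + n + 1 : ℝ) ≤ (n + 1) * 4 ^ j := by
    have hb : (1 : ℝ) + j * 3 ≤ 4 ^ j := by
      have h := one_add_mul_le_pow (a := (3:ℝ)) (by norm_num) j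
      norm_num at h
      linarith [h]
    nlinarith [Nat.cast_nonneg n (α := ℝ), Nat.cast_nonneg j (α := ℝ)]
  have h3 : r ^ (2 * j) = (r ^ 2) ^ j := by rw [pow_mul]
  have hfj := fact_pos j
  rw [div_le_iff₀ (by positivity)]
  have hrhs : ((n:ℝ) + 1) * ((4 * r ^ 2) ^ j / Nat.factorial j) * (Nat.factorial j * Nat.factorial (j + n))
      = ((n:ℝ) + 1) * (4 * r ^ 2) ^ j * Nat.factorial (j + n) := by
    field_simp
  rw [hrhs]
  calc (2 * j + n + 1 : ℝ) * r ^ (2 * j)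
      ≤ ((n + 1) * 4 ^ j) * (r ^ 2) ^ j := by
        rw [h3]; exact mul_le_mul_of_nonneg_right h2 (by positivity)
    _ = (n + 1) * (4 * r ^ 2) ^ j := by rw [mul_pow]; ring
    _ ≤ ((n:ℝ) + 1) * (4 * r ^ 2) ^ j * Nat.factorial (j + n) := by
        nlinarith [h1, mul_nonneg (mul_nonneg (by positivity : (0:ℝ) ≤ (n:ℝ)+1) (by positivity : (0:ℝ) ≤ (4*r^2)^j)) (le_of_lt (fact_pos (j+n)))]

lemma besselI_eq (n : ℕ) (x : ℝ) :
    besselI n x = ∑' j : ℕ, bb n j * x ^ (2 * j + n) := by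
  unfold besselI bb
  congr 1; funext j
  rw [div_pow, div_mul_eq_mul_div, div_div, one_div, inv_pow]
  rw [inv_mul_eq_div, div_div, mul_comm ((2:ℝ) ^ (2*j+n))]


/-- summable bound series -/
lemma summable_u (n : ℕ) {R : ℝ} (hR : 0 ≤ R) :
    Summable (fun j : ℕ => bb n j * (2 * j + n + 1 : ℝ) * R ^ (2 * j + n)) := by
  have h := (summable_master n (by positivity : (0:ℝ) ≤ R / 2)).mul_left ((R / 2) ^ n)
  refine h.congr fun j => ?_
  unfold bb
  field_simp
  ring

lemma summable_bb_pow (n : ℕ) {x : ℝ} (hx : 0 ≤ x) :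
    Summable (fun j : ℕ => bb n j * x ^ (2 * j + n)) := by
  refine Summable.of_nonneg_of_le
    (fun j => mul_nonneg (bb_pos n j).le (pow_nonneg hx _)) (fun j => ?_) (summable_u n hx)
  have h1 : (1:ℝ) ≤ 2 * j + n + 1 := by
    have : (0:ℝ) ≤ 2 * j + n := by positivity
    linarith
  nlinarith [bb_pos n j, pow_nonneg hx (2*j+n), mul_nonneg (bb_pos n j).le (pow_nonneg hx (2*j+n))]

/-- core single-term monotonicity -/
lemma term_mono (m : ℕ) {x y : ℝ} (h0 : 0 ≤ x) (hxy : x ≤ y) (hy : y ≤ (m : ℝ) + 1/2) :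
    Real.sqrt x * Real.exp (-x) * x ^ m ≤ Real.sqrt y * Real.exp (-y) * y ^ m := by
  rcases eq_or_lt_of_le h0 with h | hx0
  · have hy0 : 0 ≤ y := le_trans h0 hxy
    rw [← h, Real.sqrt_zero, zero_mul, zero_mul]
    positivity
  · have hy0 : 0 < y := lt_of_lt_of_le hx0 hxy
    have hL : 0 < Real.sqrt x * Real.exp (-x) * x ^ m := by positivity
    have hR : 0 < Real.sqrt y * Real.exp (-y) * y ^ m := by positivity
    rw [← Real.log_le_log_iff hL hR]
    rw [Real.log_mul (by positivity) (by positivity), Real.log_mul (by positivity) (by positivity),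
      Real.log_mul (by positivity) (by positivity), Real.log_mul (by positivity) (by positivity),
      Real.log_exp, Real.log_exp, Real.log_pow, Real.log_pow,
      Real.log_sqrt h0, Real.log_sqrt hy0.le]
    have hlog : Real.log x ≤ Real.log y := Real.log_le_log hx0 hxy
    have h1 : Real.log (x / y) ≤ x / y - 1 := Real.log_le_sub_one_of_pos (by positivity)
    rw [Real.log_div (ne_of_gt hx0) (ne_of_gt hy0)] at h1
    have h2 : y * (Real.log x - Real.log y) ≤ x - y := by
      have h3 := mul_le_mul_of_nonneg_left h1 hy0.le
      calc y * (Real.log x - Real.log y) ≤ y * (x / y - 1) := h3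
        _ = x - y := by field_simp
    have key : y - x ≤ ((m : ℝ) + 1/2) * (Real.log y - Real.log x) := by
      nlinarith [mul_nonneg (by linarith : (0:ℝ) ≤ (m:ℝ) + 1/2 - y)
        (by linarith : (0:ℝ) ≤ Real.log y - Real.log x)]
    linarith

/-- Part 1 : monotone on [0, n + 1/2] (any n). -/
lemma part1 (n : ℕ) :
    MonotoneOn (fun x : ℝ => Real.sqrt x * Real.exp (-x) * besselI n x)
      (Set.Icc (0 : ℝ) ((n : ℝ) + 1 / 2)) := by
  rintro x ⟨hx0, hx1⟩ y ⟨hy0, hy1⟩ hxy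
  simp only
  rw [besselI_eq, besselI_eq, ← tsum_mul_left, ← tsum_mul_left]
  refine Summable.tsum_le_tsum (fun j => ?_) ((summable_bb_pow n hx0).mul_left _)
    ((summable_bb_pow n hy0).mul_left _)
  have e1 : Real.sqrt x * Real.exp (-x) * (bb n j * x ^ (2*j+n))
      = bb n j * (Real.sqrt x * Real.exp (-x) * x ^ (2*j+n)) := by ring
  have e2 : Real.sqrt y * Real.exp (-y) * (bb n j * y ^ (2*j+n))
      = bb n j * (Real.sqrt y * Real.exp (-y) * y ^ (2*j+n)) := by ring
  rw [e1, e2]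
  refine mul_le_mul_of_nonneg_left (term_mono (2*j+n) hx0 hxy ?_) (bb_pos n j).le
  push_cast
  linarith


/-- Vandermonde consequence -/
lemma vand (n k : ℕ) :
    ∑ i ∈ range (k+1), (k.choose i) * ((k+2*n).choose (i+n)) = (2*k+2*n).choose (k+n) := by
  have h := Nat.add_choose_eq k (k+2*n) (k+n)
  rw [show k + (k+2*n) = 2*k+2*n by ring] at h
  rw [h, Finset.Nat.sum_antidiagonal_eq_sum_range_succ_mk]
  rw [← Finset.sum_subset (Finset.range_subset_range.mpr (by omega : k+1 ≤ k+n+1))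
      (fun i hi hni => by
        rw [Finset.mem_range] at hi hni
        rw [Nat.choose_eq_zero_of_lt (by omega), zero_mul])]
  refine Finset.sum_congr rfl fun i hi => ?_
  rw [Finset.mem_range] at hi
  congr 1
  rw [show k + n - i = (k+2*n) - (i+n) by omega, Nat.choose_symm (by omega)]

/-- closed form for the Cauchy-product coefficients -/
lemma Bval (n k : ℕ) :
    ∑ p ∈ antidiagonal k, bb n p.1 * bb n p.2
      = ((2*k+2*n).choose (k+n) : ℝ) * ((1/2:ℝ)^(2*k+2*n) / (Nat.factorial k * Nat.factorial (k+2*n))) := by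
  rw [Finset.Nat.sum_antidiagonal_eq_sum_range_succ_mk]
  have step : ∀ i ∈ range (k+1), bb n i * bb n (k - i)
      = ((k.choose i * ((k+2*n).choose (i+n)) : ℕ) : ℝ)
        * ((1/2:ℝ)^(2*k+2*n) / (Nat.factorial k * Nat.factorial (k+2*n))) := by
    intro i hi
    rw [Finset.mem_range] at hi
    have hik : i ≤ k := by omega
    have e1 : (Nat.factorial k : ℝ) = (k.choose i : ℝ) * Nat.factorial i * Nat.factorial (k-i) := by
      exact_mod_cast congrArg (Nat.cast (R := ℝ)) (Nat.choose_mul_factorial_mul_factorial hik).symm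
    have e2' := Nat.choose_mul_factorial_mul_factorial (show i+n ≤ k+2*n by omega)
    rw [show k+2*n - (i+n) = (k-i)+n by omega] at e2'
    have e2 : (Nat.factorial (k+2*n) : ℝ)
        = ((k+2*n).choose (i+n) : ℝ) * Nat.factorial (i+n) * Nat.factorial ((k-i)+n) := by
      exact_mod_cast congrArg (Nat.cast (R := ℝ)) e2'.symm
    unfold bb
    have epow : (1/2:ℝ)^(2*i+n) * (1/2:ℝ)^(2*(k-i)+n) = (1/2:ℝ)^(2*k+2*n) := by
      rw [← pow_add]; congr 1; omega
    rw [div_mul_div_comm, epow]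
    rw [e1, e2]
    push_cast
    have c1 : (0:ℝ) < (k.choose i : ℝ) := by exact_mod_cast Nat.choose_pos hik
    have c2 : (0:ℝ) < ((k+2*n).choose (i+n) : ℝ) := by exact_mod_cast Nat.choose_pos (show i+n ≤ k+2*n by omega)
    have f1 := fact_pos i; have f2 := fact_pos (i+n); have f3 := fact_pos (k-i); have f4 := fact_pos ((k-i)+n)
    field_simp
  rw [Finset.sum_congr rfl step, ← Finset.sum_mul, ← Nat.cast_sum, vand]

/-- bb recurrence under shift -/
lemma bb_succ (n i : ℕ) : ((i:ℝ)+1) * bb n (i+1) = (1/2) * bb (n+1) i := by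
  unfold bb
  rw [show 2*(i+1)+n = (2*i+(n+1))+1 by omega, pow_succ]
  rw [show i+1+n = i+(n+1) by omega, Nat.factorial_succ i]
  have f1 := fact_pos i; have f2 := fact_pos (i+(n+1))
  field_simp
  push_cast
  ring


lemma coeff_ineq_zero (n : ℕ) (hn : 1 ≤ n) :
    4 * ∑ p ∈ antidiagonal (0:ℕ), bb n p.1 * bb n p.2
      ≤ ∑ p ∈ antidiagonal (1:ℕ), ((4*(p.1:ℝ)+2*(n:ℝ)+1) * (4*(p.2:ℝ)+2*(n:ℝ)+1)) * (bb n p.1 * bb n p.2) := by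
  rw [Finset.Nat.sum_antidiagonal_eq_sum_range_succ_mk, Finset.Nat.sum_antidiagonal_eq_sum_range_succ_mk]
  rw [Finset.sum_range_succ, Finset.sum_range_succ, Finset.sum_range_succ, Finset.sum_range_zero]
  norm_num
  -- relation between bb n 1 and bb n 0
  have h01 : 4*((n:ℝ)+1) * bb n 1 = bb n 0 := by
    unfold bb
    rw [show 2*1+n = n+1+1 by omega, pow_succ, pow_succ, show 2*0+n = n by omega,
      show 1+n = n+1 by omega, Nat.factorial_succ n, Nat.factorial_one, Nat.factorial_zero]
    have := fact_pos n
    field_simp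
    push_cast
    ring
  have hb0 := bb_pos n 0
  have hb1 := bb_pos n 1
  have hn' : (1:ℝ) ≤ (n:ℝ) := by exact_mod_cast hn
  nlinarith [sq_nonneg ((n:ℝ)-1), mul_pos hb0 hb1]

set_option maxHeartbeats 2000000 in
lemma coeff_ineq_succ (n l : ℕ) (hn : 1 ≤ n) :
    4 * ∑ p ∈ antidiagonal (l+1), bb n p.1 * bb n p.2
      ≤ ∑ p ∈ antidiagonal (l+2), ((4*(p.1:ℝ)+2*(n:ℝ)+1) * (4*(p.2:ℝ)+2*(n:ℝ)+1)) * (bb n p.1 * bb n p.2) := by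
  have hA : ∑ p ∈ antidiagonal (l+2), ((4*(p.1:ℝ)+2*(n:ℝ)+1)*(4*(p.2:ℝ)+2*(n:ℝ)+1))*(bb n p.1*bb n p.2)
      = 16 * (∑ p ∈ antidiagonal (l+2), ((p.1:ℝ)*(p.2:ℝ))*(bb n p.1*bb n p.2))
        + ((2*(n:ℝ)+1)*(4*((l:ℝ)+2)+2*n+1)) * ∑ p ∈ antidiagonal (l+2), bb n p.1*bb n p.2 := by
    rw [Finset.mul_sum, Finset.mul_sum, ← Finset.sum_add_distrib]
    refine Finset.sum_congr rfl fun p hp => ?_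
    rw [Finset.HasAntidiagonal.mem_antidiagonal] at hp
    have hsum : (p.1:ℝ) + (p.2:ℝ) = (l:ℝ) + 2 := by
      have := congrArg (Nat.cast (R := ℝ)) hp
      push_cast at this
      linarith
    linear_combination (4*(2*(n:ℝ)+1)*(bb n p.1 * bb n p.2)) * hsum
  have hT : ∑ p ∈ antidiagonal (l+2), ((p.1:ℝ)*(p.2:ℝ))*(bb n p.1*bb n p.2)
      = (1/4) * ∑ p ∈ antidiagonal l, bb (n+1) p.1 * bb (n+1) p.2 := by
    rw [Finset.Nat.sum_antidiagonal_eq_sum_range_succ_mk, Finset.Nat.sum_antidiagonal_eq_sum_range_succ_mk]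
    rw [Finset.sum_range_succ']
    rw [Finset.sum_range_succ]
    simp only [Nat.cast_zero, zero_mul, mul_zero, add_zero, Nat.cast_ofNat]
    have hlast : ((l+1+1:ℕ):ℝ) * ((l+2-(l+1+1):ℕ):ℝ) * (bb n (l+1+1) * bb n (l+2-(l+1+1))) = 0 := by
      rw [show l+2-(l+1+1) = 0 by omega]
      norm_num
    rw [hlast, add_zero, Finset.mul_sum]
    refine Finset.sum_congr rfl fun i hi => ?_
    rw [Finset.mem_range] at hi
    rw [show l+2-(i+1) = (l-i)+1 by omega]
    have h1 := bb_succ n i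
    have h2 := bb_succ n (l-i)
    have c1 : ((i+1:ℕ):ℝ) = (i:ℝ)+1 := by push_cast; ring
    have c2 : (((l-i)+1:ℕ):ℝ) = ((l-i:ℕ):ℝ)+1 := by push_cast; ring
    rw [c1, c2]
    linear_combination (((l-i:ℕ):ℝ)+1) * bb n ((l-i)+1) * h1 + (1/2 * bb (n+1) i) * h2
  rw [hA, hT, Bval n (l+1), Bval n (l+2), Bval (n+1) l]
  -- index normalizations
  have hc0 : ((2*l+2*(n+1)).choose (l+(n+1)) : ℝ) = ((2*(l+1)+2*n).choose (l+1+n) : ℝ) := by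
    rw [show 2*l+2*(n+1) = 2*(l+1)+2*n by omega, show l+(n+1) = l+1+n by omega]
  rw [hc0]
  set c0 : ℝ := ((2*(l+1)+2*n).choose (l+1+n) : ℝ) with hc0def
  set c1 : ℝ := ((2*(l+2)+2*n).choose (l+2+n) : ℝ) with hc1def
  have hc0pos : 0 < c0 := by
    rw [hc0def]; exact_mod_cast Nat.choose_pos (by omega)
  -- central binomial recurrence
  have hrel : ((l:ℝ)+n+2) * c1 = 2*(2*((l:ℝ)+n+1)+1) * c0 := by
    have h := Nat.succ_mul_centralBinom_succ (l+n+1)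
    unfold Nat.centralBinom at h
    have h' := congrArg (Nat.cast (R := ℝ)) h
    push_cast at h'
    rw [hc0def, hc1def, show 2*(l+2)+2*n = 2*(l+n+1+1) by omega, show l+2+n = l+n+1+1 by omega,
      show 2*(l+1)+2*n = 2*(l+n+1) by omega, show l+1+n = l+n+1 by omega]
    push_cast
    linarith [h']
  -- factorial expansions
  have hf1 : (Nat.factorial (l+2) : ℝ) = ((l:ℝ)+2)*((l:ℝ)+1)*Nat.factorial l := by
    rw [show l+2 = (l+1)+1 by omega, Nat.factorial_succ, Nat.factorial_succ]
    push_cast; ring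
  have hf2 : (Nat.factorial (l+1) : ℝ) = ((l:ℝ)+1)*Nat.factorial l := by
    rw [Nat.factorial_succ]; push_cast; ring
  have hf3 : (Nat.factorial (l+2+2*n) : ℝ) = ((l:ℝ)+2+2*n)*Nat.factorial (l+1+2*n) := by
    rw [show l+2+2*n = (l+1+2*n)+1 by omega, Nat.factorial_succ]
    push_cast; ring
  have hf4 : (Nat.factorial (l+2*(n+1)) : ℝ) = ((l:ℝ)+2+2*n)*Nat.factorial (l+1+2*n) := by
    rw [show l+2*(n+1) = (l+1+2*n)+1 by omega, Nat.factorial_succ]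
    push_cast; ring
  -- power expansions
  have hp1 : (1/2:ℝ)^(2*(l+2)+2*n) = (1/2:ℝ)^(2*(l+1)+2*n) * (1/4) := by
    rw [show 2*(l+2)+2*n = (2*(l+1)+2*n)+2 by omega, pow_add]; norm_num
  have hp2 : (1/2:ℝ)^(2*l+2*(n+1)) = (1/2:ℝ)^(2*(l+1)+2*n) := by
    rw [show 2*l+2*(n+1) = 2*(l+1)+2*n by omega]
  rw [hp1, hp2, hf1, hf2, hf3, hf4]
  have hE : (0:ℝ) < (1/2:ℝ)^(2*(l+1)+2*n) := by positivity
  set E : ℝ := (1/2:ℝ)^(2*(l+1)+2*n)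
  have hfl := fact_pos l
  have hfln := fact_pos (l+1+2*n)
  have hn' : (1:ℝ) ≤ (n:ℝ) := by exact_mod_cast hn
  have hl' : (0:ℝ) ≤ (l:ℝ) := Nat.cast_nonneg l
  set F : ℝ := (Nat.factorial (l+1+2*n) : ℝ) with hF
  have h2n1 : (0:ℝ) < 2*(n:ℝ)+1 := by linarith
  have hX : (0:ℝ) ≤ 2*(l:ℝ)*(2*(n:ℝ)-1)+4*(n:ℝ)^2+8*(n:ℝ)-5 := by
    nlinarith [mul_nonneg hl' (by linarith : (0:ℝ) ≤ 2*(n:ℝ)-1)]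
  have key : 16*((l:ℝ)+2)*((l:ℝ)+2+2*(n:ℝ))*((l:ℝ)+(n:ℝ)+2)*c0
      ≤ 16*((l:ℝ)+1)*((l:ℝ)+2)*((l:ℝ)+(n:ℝ)+2)*c0
        + (2*(n:ℝ)+1)*(4*((l:ℝ)+2)+2*(n:ℝ)+1)*(((l:ℝ)+(n:ℝ)+2)*c1) := by
    have hid : (16*((l:ℝ)+1)*((l:ℝ)+2)*((l:ℝ)+(n:ℝ)+2)*c0
          + (2*(n:ℝ)+1)*(4*((l:ℝ)+2)+2*(n:ℝ)+1)*(((l:ℝ)+(n:ℝ)+2)*c1))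
          - 16*((l:ℝ)+2)*((l:ℝ)+2+2*(n:ℝ))*((l:ℝ)+(n:ℝ)+2)*c0
        = 2*c0*(2*(n:ℝ)+1)*(2*(l:ℝ)*(2*(n:ℝ)-1)+4*(n:ℝ)^2+8*(n:ℝ)-5) := by
      linear_combination ((2*(n:ℝ)+1)*(4*((l:ℝ)+2)+2*(n:ℝ)+1)) * hrel
    nlinarith [mul_nonneg (mul_nonneg (by linarith : (0:ℝ) ≤ 2*c0) h2n1.le) hX]
  have hμpos : (0:ℝ) < E / (4*((l:ℝ)+(n:ℝ)+2)*(((l:ℝ)+2)*((l:ℝ)+1)*(Nat.factorial l : ℝ)*(((l:ℝ)+2+2*(n:ℝ))*F))) := by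
    apply div_pos hE
    have : (0:ℝ) < (l:ℝ)+2+2*(n:ℝ) := by linarith
    positivity
  set μ : ℝ := E / (4*((l:ℝ)+(n:ℝ)+2)*(((l:ℝ)+2)*((l:ℝ)+1)*(Nat.factorial l : ℝ)*(((l:ℝ)+2+2*(n:ℝ))*F))) with hμ
  have hne1 : ((l:ℝ)+1) ≠ 0 := by linarith
  have hne2 : ((l:ℝ)+2) ≠ 0 := by linarith
  have hne3 : ((l:ℝ)+2+2*(n:ℝ)) ≠ 0 := by linarith
  have hne4 : ((l:ℝ)+(n:ℝ)+2) ≠ 0 := by linarith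
  have hne5 : (Nat.factorial l : ℝ) ≠ 0 := ne_of_gt hfl
  have hne6 : F ≠ 0 := ne_of_gt hfln
  calc 4 * (c0 * (E / (((l:ℝ) + 1) * (Nat.factorial l : ℝ) * F)))
      = 16*((l:ℝ)+2)*((l:ℝ)+2+2*(n:ℝ))*((l:ℝ)+(n:ℝ)+2)*c0 * μ := by
        rw [hμ]; field_simp; ring
    _ ≤ (16*((l:ℝ)+1)*((l:ℝ)+2)*((l:ℝ)+(n:ℝ)+2)*c0
        + (2*(n:ℝ)+1)*(4*((l:ℝ)+2)+2*(n:ℝ)+1)*(((l:ℝ)+(n:ℝ)+2)*c1)) * μ := by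
        exact mul_le_mul_of_nonneg_right key hμpos.le
    _ = 16 * (1 / 4 * (c0 * (E / ((Nat.factorial l : ℝ) * (((l:ℝ) + 2 + 2 * (n:ℝ)) * F)))))
        + (2 * (n:ℝ) + 1) * (4 * ((l:ℝ) + 2) + 2 * (n:ℝ) + 1) *
          (c1 * (E * (1 / 4) / (((l:ℝ) + 2) * ((l:ℝ) + 1) * (Nat.factorial l : ℝ) * (((l:ℝ) + 2 + 2 * (n:ℝ)) * F)))) := by
        rw [hμ]; field_simp

lemma coeff_ineq (n k : ℕ) (hn : 1 ≤ n) :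
    4 * ∑ p ∈ antidiagonal k, bb n p.1 * bb n p.2
      ≤ ∑ p ∈ antidiagonal (k+1), ((4*(p.1:ℝ)+2*(n:ℝ)+1) * (4*(p.2:ℝ)+2*(n:ℝ)+1)) * (bb n p.1 * bb n p.2) := by
  cases k with
  | zero => exact coeff_ineq_zero n hn
  | succ l => exact coeff_ineq_succ n l hn

lemma bb_le (n j : ℕ) : bb n j ≤ (1/2:ℝ)^n / (Nat.factorial j * Nat.factorial (j+n)) := by
  unfold bb
  have h : (1/2:ℝ)^(2*j+n) ≤ (1/2:ℝ)^n :=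
    pow_le_pow_of_le_one (by norm_num) (by norm_num) (by omega)
  have hD : (0:ℝ) < Nat.factorial j * Nat.factorial (j+n) :=
    mul_pos (fact_pos j) (fact_pos (j+n))
  exact (div_le_div_iff_of_pos_right hD).mpr h

lemma summable_pp (n : ℕ) {x : ℝ} (hx : 0 ≤ x) :
    Summable (fun j : ℕ => bb n j * (4*(j:ℝ)+2*(n:ℝ)+1) * x ^ (2*j)) := by
  refine Summable.of_nonneg_of_le
    (fun j => mul_nonneg (mul_nonneg (bb_pos n j).le (by positivity)) (by positivity))
    (fun j => ?_) ((summable_master n hx).mul_left ((2:ℝ)*(1/2:ℝ)^n))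
  have hD : (0:ℝ) < Nat.factorial j * Nat.factorial (j+n) :=
    mul_pos (fact_pos j) (fact_pos (j+n))
  calc bb n j * (4*(j:ℝ)+2*(n:ℝ)+1) * x ^ (2*j)
      ≤ ((1/2:ℝ)^n / (Nat.factorial j * Nat.factorial (j+n))) * (2*(2*(j:ℝ)+(n:ℝ)+1)) * x ^ (2*j) := by
        have h1 : (4*(j:ℝ)+2*(n:ℝ)+1) ≤ 2*(2*(j:ℝ)+(n:ℝ)+1) := by linarith
        have h2 := bb_le n j
        have hb := bb_pos n j
        have hx2 : (0:ℝ) ≤ x ^ (2*j) := by positivity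
        nlinarith [mul_le_mul h2 h1 (by linarith) (by positivity : (0:ℝ) ≤ (1/2:ℝ)^n / (Nat.factorial j * Nat.factorial (j+n))), mul_nonneg (mul_nonneg hb.le (by linarith : (0:ℝ) ≤ 4*(j:ℝ)+2*(n:ℝ)+1)) hx2]
    _ = 2*(1/2:ℝ)^n * ((2 * ↑j + ↑n + 1) * x ^ (2 * j) / (↑(Nat.factorial j) * ↑(Nat.factorial (j + n)))) := by
        ring
  
lemma summable_qq (n : ℕ) {x : ℝ} (hx : 0 ≤ x) :
    Summable (fun j : ℕ => bb n j * x ^ (2*j)) := by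
  refine Summable.of_nonneg_of_le (fun j => mul_nonneg (bb_pos n j).le (by positivity))
    (fun j => ?_) (summable_pp n hx)
  have h1 : (1:ℝ) ≤ 4*(j:ℝ)+2*(n:ℝ)+1 := by
    have : (0:ℝ) ≤ 4*(j:ℝ)+2*(n:ℝ) := by positivity
    linarith
  nlinarith [bb_pos n j, pow_nonneg hx (2*j), mul_nonneg (bb_pos n j).le (pow_nonneg hx (2*j))]

/-- The key pointwise inequality: `2x·Q(x) ≤ P(x)` for `n ≥ 1`. -/
lemma key_ineq (n : ℕ) (hn : 1 ≤ n) {x : ℝ} (hx : 0 ≤ x) :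
    2 * x * ∑' j : ℕ, bb n j * x ^ (2*j)
      ≤ ∑' j : ℕ, bb n j * (4*(j:ℝ)+2*(n:ℝ)+1) * x ^ (2*j) := by
  set q : ℕ → ℝ := fun j => bb n j * x ^ (2*j) with hq
  set p : ℕ → ℝ := fun j => bb n j * (4*(j:ℝ)+2*(n:ℝ)+1) * x ^ (2*j) with hp
  have hqs : Summable q := summable_qq n hx
  have hps : Summable p := summable_pp n hx
  have hqn : ∀ j, 0 ≤ q j := fun j => mul_nonneg (bb_pos n j).le (by positivity)
  have hpn : ∀ j, 0 ≤ p j := fun j =>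
    mul_nonneg (mul_nonneg (bb_pos n j).le (by positivity)) (by positivity)
  have hqnorm : Summable (fun j => ‖q j‖) := hqs.congr fun j => (Real.norm_of_nonneg (hqn j)).symm
  have hpnorm : Summable (fun j => ‖p j‖) := hps.congr fun j => (Real.norm_of_nonneg (hpn j)).symm
  set SQ := ∑' j, q j with hSQ
  set SP := ∑' j, p j with hSP
  have hSQn : 0 ≤ SQ := tsum_nonneg hqn
  have hSPn : 0 ≤ SP := tsum_nonneg hpn
  have hcq : SQ * SQ = ∑' k : ℕ, ∑ ij ∈ antidiagonal k, q ij.1 * q ij.2 :=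
    tsum_mul_tsum_eq_tsum_sum_antidiagonal_of_summable_norm hqnorm hqnorm
  have hcp : SP * SP = ∑' k : ℕ, ∑ ij ∈ antidiagonal k, p ij.1 * p ij.2 :=
    tsum_mul_tsum_eq_tsum_sum_antidiagonal_of_summable_norm hpnorm hpnorm
  have hWs : Summable (fun k : ℕ => ∑ ij ∈ antidiagonal k, q ij.1 * q ij.2) :=
    summable_sum_mul_antidiagonal_of_summable_mul
      (summable_mul_of_summable_norm hqnorm hqnorm)
  have hZs : Summable (fun k : ℕ => ∑ ij ∈ antidiagonal k, p ij.1 * p ij.2) :=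
    summable_sum_mul_antidiagonal_of_summable_mul
      (summable_mul_of_summable_norm hpnorm hpnorm)
  -- shifted sequence
  set V : ℕ → ℝ := fun k => match k with
    | 0 => 0
    | (k+1) => 4 * x^2 * ∑ ij ∈ antidiagonal k, q ij.1 * q ij.2 with hV
  have hVs : Summable V := by
    rw [← summable_nat_add_iff 1]
    exact (hWs.mul_left (4 * x^2)).congr fun k => rfl
  have hVsum : ∑' k, V k = 4 * x^2 * (SQ * SQ) := by
    rw [hcq, Summable.tsum_eq_zero_add hVs]
    show (0:ℝ) + ∑' k, 4 * x^2 * ∑ ij ∈ antidiagonal k, q ij.1 * q ij.2 = _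
    rw [zero_add, tsum_mul_left]
  -- coefficientwise comparison
  have hVZ : ∀ k, V k ≤ ∑ ij ∈ antidiagonal k, p ij.1 * p ij.2 := by
    intro k
    cases k with
    | zero =>
      show (0:ℝ) ≤ _
      exact Finset.sum_nonneg fun ij _ => mul_nonneg (hpn _) (hpn _)
    | succ k =>
      show 4 * x^2 * ∑ ij ∈ antidiagonal k, q ij.1 * q ij.2 ≤ _
      have hq2 : ∑ ij ∈ antidiagonal k, q ij.1 * q ij.2
          = (∑ ij ∈ antidiagonal k, bb n ij.1 * bb n ij.2) * x^(2*k) := by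
        rw [Finset.sum_mul]
        refine Finset.sum_congr rfl fun ij hij => ?_
        rw [Finset.HasAntidiagonal.mem_antidiagonal] at hij
        show bb n ij.1 * x ^ (2*ij.1) * (bb n ij.2 * x ^ (2*ij.2)) = _
        rw [show 2*k = 2*ij.1 + 2*ij.2 by omega, pow_add]
        ring
      have hp2 : ∑ ij ∈ antidiagonal (k+1), p ij.1 * p ij.2
          = (∑ ij ∈ antidiagonal (k+1), ((4*(ij.1:ℝ)+2*(n:ℝ)+1) * (4*(ij.2:ℝ)+2*(n:ℝ)+1)) * (bb n ij.1 * bb n ij.2)) * x^(2*(k+1)) := by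
        rw [Finset.sum_mul]
        refine Finset.sum_congr rfl fun ij hij => ?_
        rw [Finset.HasAntidiagonal.mem_antidiagonal] at hij
        show bb n ij.1 * (4*(ij.1:ℝ)+2*(n:ℝ)+1) * x ^ (2*ij.1) * (bb n ij.2 * (4*(ij.2:ℝ)+2*(n:ℝ)+1) * x ^ (2*ij.2)) = _
        rw [show 2*(k+1) = 2*ij.1 + 2*ij.2 by omega, pow_add]
        ring
      rw [hq2, hp2]
      have hco := coeff_ineq n k hn
      calc 4 * x^2 * ((∑ ij ∈ antidiagonal k, bb n ij.1 * bb n ij.2) * x^(2*k))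
          = (4 * ∑ ij ∈ antidiagonal k, bb n ij.1 * bb n ij.2) * x^(2*(k+1)) := by
            rw [show 2*(k+1) = 2*k+2 by omega, pow_add]; ring
        _ ≤ _ := by
            apply mul_le_mul_of_nonneg_right hco (by positivity)
  have hsq : (2 * x * SQ)^2 ≤ SP^2 := by
    have e1 : (2 * x * SQ)^2 = 4 * x^2 * (SQ * SQ) := by ring
    have e2 : SP^2 = SP * SP := by ring
    rw [e1, e2, hcp, ← hVsum]
    exact Summable.tsum_le_tsum hVZ hVs hZs
  nlinarith [hsq, mul_nonneg (mul_nonneg (by norm_num : (0:ℝ) ≤ 2) hx) hSQn, hSPn]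

set_option maxHeartbeats 1000000 in
/-- term-by-term derivative of `besselI (m+1)` at positive points -/
lemma hasDerivAt_besselI (m : ℕ) {x : ℝ} (hx : 0 < x) :
    HasDerivAt (besselI (m+1))
      (∑' j : ℕ, bb (m+1) j * (2*(j:ℝ)+(m:ℝ)+1) * x^(2*j+m)) x := by
  set R := x + 1 with hR
  have hR1 : (1:ℝ) ≤ R := by rw [hR]; linarith
  have hR0 : (0:ℝ) ≤ R := by linarith
  have hmem : x ∈ Set.Ioo (0:ℝ) R := ⟨hx, by rw [hR]; linarith⟩
  have H := hasDerivAt_tsum_of_isPreconnected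
    (u := fun j : ℕ => bb (m+1) j * (2*(j:ℝ)+((m+1:ℕ):ℝ)+1) * R^(2*j+(m+1)))
    (g := fun j y => bb (m+1) j * y^(2*j+(m+1)))
    (g' := fun j y => bb (m+1) j * (2*(j:ℝ)+(m:ℝ)+1) * y^(2*j+m))
    (summable_u (m+1) hR0) (isOpen_Ioo (a := (0:ℝ)) (b := R))
    ((convex_Ioo (0:ℝ) R).isPreconnected) ?_ ?_ hmem (summable_bb_pow (m+1) hx.le) hmem
  · have heq : besselI (m+1) = fun y => ∑' j : ℕ, bb (m+1) j * y^(2*j+(m+1)) :=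
      funext fun y => besselI_eq (m+1) y
    rw [heq]
    exact H
  · intro j y hy
    have h := (hasDerivAt_pow (2*j+(m+1)) y).const_mul (bb (m+1) j)
    refine h.congr_deriv ?_
    rw [show 2*j+(m+1)-1 = 2*j+m by omega]
    push_cast
    ring
  · intro j y hy
    obtain ⟨hy0, hyR⟩ := hy
    rw [Real.norm_of_nonneg (mul_nonneg (mul_nonneg (bb_pos (m+1) j).le (by positivity)) (by positivity))]
    have h1 : y ^ (2*j+m) ≤ R ^ (2*j+(m+1)) := by
      calc y ^ (2*j+m) ≤ R ^ (2*j+m) := pow_le_pow_left₀ hy0.le hyR.le _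
        _ ≤ R ^ (2*j+(m+1)) := pow_le_pow_right₀ hR1 (by omega)
    have h2 : (2*(j:ℝ)+(m:ℝ)+1) ≤ (2*(j:ℝ)+((m:ℕ)+1:ℝ)+1) := by push_cast; linarith
    have hb := bb_pos (m+1) j
    have hc : (0:ℝ) ≤ 2*(j:ℝ)+(m:ℝ)+1 := by positivity
    calc bb (m+1) j * (2*(j:ℝ)+(m:ℝ)+1) * y ^ (2*j+m)
        ≤ bb (m+1) j * (2*(j:ℝ)+(m:ℝ)+1) * R ^ (2*j+(m+1)) := by
          apply mul_le_mul_of_nonneg_left h1 (mul_nonneg hb.le hc)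
      _ ≤ bb (m+1) j * (2*(j:ℝ)+((m+1:ℕ):ℝ)+1) * R ^ (2*j+(m+1)) := by
          apply mul_le_mul_of_nonneg_right (mul_le_mul_of_nonneg_left (by push_cast; linarith) hb.le) (by positivity)

lemma continuousOn_f (n : ℕ) (M : ℝ) (hM : 0 ≤ M) :
    ContinuousOn (fun x : ℝ => Real.sqrt x * Real.exp (-x) * besselI n x) (Set.Icc 0 M) := by
  have hb : ContinuousOn (besselI n) (Set.Icc (0:ℝ) M) := by
    have heq : besselI n = fun x => ∑' j : ℕ, bb n j * x^(2*j+n) := funext fun y => besselI_eq n y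
    rw [heq]
    refine continuousOn_tsum (fun j => (continuous_const.mul (continuous_pow _)).continuousOn)
      (summable_u n hM) (fun j x hx => ?_)
    obtain ⟨hx0, hxM⟩ := hx
    rw [Real.norm_of_nonneg (mul_nonneg (bb_pos n j).le (by positivity))]
    have h1 : x ^ (2*j+n) ≤ M ^ (2*j+n) := pow_le_pow_left₀ hx0 hxM _
    have h2 : (1:ℝ) ≤ 2*(j:ℝ)+(n:ℝ)+1 := by
      have : (0:ℝ) ≤ 2*(j:ℝ)+(n:ℝ) := by positivity
      linarith
    have hb := bb_pos n j
    calc bb n j * x ^ (2*j+n) ≤ bb n j * M ^ (2*j+n) :=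
          mul_le_mul_of_nonneg_left h1 hb.le
      _ = bb n j * 1 * M ^ (2*j+n) := by ring
      _ ≤ bb n j * (2*(j:ℝ)+(n:ℝ)+1) * M ^ (2*j+n) := by
          apply mul_le_mul_of_nonneg_right (mul_le_mul_of_nonneg_left h2 hb.le) (pow_nonneg hM _)
  exact ((Real.continuous_sqrt.continuousOn).mul
    ((Real.continuous_exp.comp continuous_neg).continuousOn)).mul hb

lemma part2 (n : ℕ) (hn : 1 ≤ n) :
    MonotoneOn (fun x : ℝ => Real.sqrt x * Real.exp (-x) * besselI n x) (Set.Ici (0:ℝ)) := by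
  obtain ⟨m, rfl⟩ : ∃ m, n = m + 1 := ⟨n-1, by omega⟩
  have key : ∀ M : ℝ, 0 < M →
      MonotoneOn (fun x : ℝ => Real.sqrt x * Real.exp (-x) * besselI (m+1) x) (Set.Icc (0:ℝ) M) := by
    intro M hM
    have hder : ∀ x, x ∈ Set.Ioo (0:ℝ) M →
        HasDerivAt (fun x : ℝ => Real.sqrt x * Real.exp (-x) * besselI (m+1) x)
          ((1/(2*Real.sqrt x) * Real.exp (-x) + Real.sqrt x * (Real.exp (-x) * (-1))) * besselI (m+1) x
            + (Real.sqrt x * Real.exp (-x)) * (∑' j : ℕ, bb (m+1) j * (2*(j:ℝ)+(m:ℝ)+1) * x^(2*j+m))) x := by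
      intro x hx
      have hexp : HasDerivAt (fun y : ℝ => Real.exp (-y)) (Real.exp (-x) * (-1)) x :=
        (Real.hasDerivAt_exp (-x)).comp x (hasDerivAt_neg x)
      exact ((Real.hasDerivAt_sqrt hx.1.ne').mul hexp).mul (hasDerivAt_besselI m hx.1)
    apply monotoneOn_of_deriv_nonneg (convex_Icc (0:ℝ) M) (continuousOn_f (m+1) M hM.le)
    · intro x hx
      rw [interior_Icc] at hx
      exact (hder x hx).differentiableAt.differentiableWithinAt
    · intro x hx
      rw [interior_Icc] at hx
      rw [(hder x hx).deriv]
      -- notation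
      have hx0 : 0 < x := hx.1
      have hs : 0 < Real.sqrt x := Real.sqrt_pos.mpr hx0
      have hs2 : Real.sqrt x * Real.sqrt x = x := Real.mul_self_sqrt hx0.le
      set Q : ℝ := ∑' j : ℕ, bb (m+1) j * x^(2*j) with hQdef
      set G : ℝ := ∑' j : ℕ, bb (m+1) j * (2*(j:ℝ)+(m:ℝ)+1) * x^(2*j) with hGdef
      have hQs : Summable (fun j : ℕ => bb (m+1) j * x^(2*j)) := summable_qq (m+1) hx0.le
      have hGs : Summable (fun j : ℕ => bb (m+1) j * (2*(j:ℝ)+(m:ℝ)+1) * x^(2*j)) := by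
        refine Summable.of_nonneg_of_le
          (fun j => mul_nonneg (mul_nonneg (bb_pos _ j).le (by positivity)) (by positivity))
          (fun j => ?_) (summable_pp (m+1) hx0.le)
        have h1 : (2*(j:ℝ)+(m:ℝ)+1) ≤ (4*(j:ℝ)+2*((m+1:ℕ):ℝ)+1) := by push_cast; linarith [Nat.cast_nonneg (α := ℝ) j]
        have := bb_pos (m+1) j
        nlinarith [pow_nonneg hx0.le (2*j), mul_nonneg (bb_pos (m+1) j).le (pow_nonneg hx0.le (2*j))]
      have hBQ : besselI (m+1) x = Q * x^(m+1) := by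
        rw [besselI_eq, hQdef, ← tsum_mul_right]
        congr 1; funext j
        rw [show 2*j+(m+1) = 2*j + (m+1) from rfl, pow_add]
        ring
      have hDG : (∑' j : ℕ, bb (m+1) j * (2*(j:ℝ)+(m:ℝ)+1) * x^(2*j+m)) = G * x^m := by
        rw [hGdef, ← tsum_mul_right]
        congr 1; funext j
        rw [pow_add]
        ring
      have hPQG : (∑' j : ℕ, bb (m+1) j * (4*(j:ℝ)+2*((m+1:ℕ):ℝ)+1) * x^(2*j)) = Q + 2*G := by
        have hcong : ∀ j : ℕ, bb (m+1) j * (4*(j:ℝ)+2*((m+1:ℕ):ℝ)+1) * x^(2*j)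
            = bb (m+1) j * x^(2*j) + 2 * (bb (m+1) j * (2*(j:ℝ)+(m:ℝ)+1) * x^(2*j)) := by
          intro j; push_cast; ring
        rw [tsum_congr hcong, Summable.tsum_add hQs (hGs.mul_left 2), tsum_mul_left]
      have hkey := key_ineq (m+1) (by omega) hx0.le
      rw [← hQdef] at hkey
      rw [hPQG] at hkey
      -- rewrite the derivative expression
      rw [hBQ, hDG]
      have hexpand : (1/(2*Real.sqrt x) * Real.exp (-x) + Real.sqrt x * (Real.exp (-x) * (-1))) * (Q * x^(m+1))
            + (Real.sqrt x * Real.exp (-x)) * (G * x^m)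
          = (Real.exp (-x) * Real.sqrt x * x^m / 2) * (Q + 2*G - 2*x*Q) := by
        have hone : (1/(2*Real.sqrt x)) = Real.sqrt x/(2*x) := by
          rw [div_eq_div_iff (by positivity) (by positivity)]
          nlinarith [hs2]
        rw [hone]
        field_simp
        ring
      rw [hexpand]
      apply mul_nonneg (by positivity)
      linarith [hkey]
  intro a ha b hb hab
  simp only [Set.mem_Ici] at ha hb
  exact key (b+1) (by linarith) ⟨ha, by linarith⟩ ⟨hb, by linarith⟩ hab

end BesselAux

/-- The function `f_n(x) = √x e^{−x} I_n(x)` is monotonically increasing on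
`[0, n + 1/2]` when `n = 0` or `n = 1`, and on all of `[0, ∞)` when `n ≥ 2`. -/
theorem besselI_sqrt_exp_monotone (n : ℕ) :
    (n ≤ 1 →
      MonotoneOn (fun x : ℝ => Real.sqrt x * Real.exp (-x) * besselI n x)
        (Set.Icc (0 : ℝ) ((n : ℝ) + 1 / 2))) ∧
    (2 ≤ n →
      MonotoneOn (fun x : ℝ => Real.sqrt x * Real.exp (-x) * besselI n x)
        (Set.Ici (0 : ℝ))) := by
  constructor
  · intro _
    exact BesselAux.part1 n
  · intro h2
    exact BesselAux.part2 n (by omega)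
end

section
/- For every real number a and every real number t, the doubly infinite series ∑_{n∈ℤ} e^{−2a²} I_{|n|}(2a²) e^{−2πint} (with terms in ℂ) converges absolutely and its sum equals exp(−4a² sin²(πt)). In particular, the squared exponential periodic kernel φ_a(t) = exp(−4a² sin²(πt)) is the Fourier transform of the symmetric finite discrete measure placing mass e^{−2a²} I_{|n|}(2a²) at the point 2πn for each n ∈ ℤ. (Lemma 'spectral.measure' of the paper, first part.) -/
open Real

private def pairEquiv : ℤ × ℕ ≃ ℕ × ℕ where
  toFun p := (p.2 + p.1.toNat, p.2 + (-p.1).toNat)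
  invFun q := ((q.1 : ℤ) - (q.2 : ℤ), min q.1 q.2)
  left_inv p := by
    obtain ⟨n, k⟩ := p
    simp only [Prod.mk.injEq]
    constructor <;> omega
  right_inv q := by
    obtain ⟨j, k⟩ := q
    simp only [Prod.mk.injEq]
    constructor <;> omega

private lemma besselI_term_sum (x α β : ℝ) (hβ : β = -α) (m : ℕ) :
    ∑' k : ℕ, (((x / 2 : ℝ) : ℂ) * Complex.exp ((α : ℂ) * Complex.I)) ^ (k + m) /
        (Nat.factorial (k + m) : ℂ) *
      ((((x / 2 : ℝ) : ℂ) * Complex.exp ((β : ℂ) * Complex.I)) ^ k / (Nat.factorial k : ℂ)) =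
    ((besselI m x : ℝ) : ℂ) * Complex.exp (((m : ℝ) * α : ℝ) * Complex.I) := by
  subst hβ
  have hterm : ∀ k : ℕ,
      (((x / 2 : ℝ) : ℂ) * Complex.exp ((α : ℂ) * Complex.I)) ^ (k + m) /
        (Nat.factorial (k + m) : ℂ) *
      ((((x / 2 : ℝ) : ℂ) * Complex.exp (((-α : ℝ) : ℂ) * Complex.I)) ^ k / (Nat.factorial k : ℂ))
      = (((x / 2) ^ (2 * k + m) / ((Nat.factorial k : ℝ) * (Nat.factorial (k + m) : ℝ)) : ℝ) : ℂ)
          * Complex.exp (((m : ℝ) * α : ℝ) * Complex.I) := by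
    intro k
    have h2 : Complex.exp ((α : ℂ) * Complex.I) ^ (k + m) *
        Complex.exp (((-α : ℝ) : ℂ) * Complex.I) ^ k
        = Complex.exp (((m : ℝ) * α : ℝ) * Complex.I) := by
      rw [← Complex.exp_nat_mul, ← Complex.exp_nat_mul, ← Complex.exp_add]
      congr 1
      push_cast
      ring
    have hk : ((Nat.factorial k : ℂ)) ≠ 0 := Nat.cast_ne_zero.mpr (Nat.factorial_ne_zero k)
    have hkm : ((Nat.factorial (k + m) : ℂ)) ≠ 0 := Nat.cast_ne_zero.mpr (Nat.factorial_ne_zero _)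
    rw [mul_pow, mul_pow]
    push_cast at h2 ⊢
    rw [div_mul_div_comm, mul_mul_mul_comm, h2, ← pow_add]
    rw [show k + m + k = 2 * k + m by ring]
    ring
  rw [tsum_congr hterm, tsum_mul_right, ← Complex.ofReal_tsum, besselI]

private lemma main_aux (x θ : ℝ) (hx : 0 ≤ x) :
    Summable (fun n : ℤ =>
      ‖((besselI n.natAbs x : ℝ) : ℂ) * Complex.exp (((-((n : ℝ) * θ) : ℝ) : ℂ) * Complex.I)‖) ∧
    ∑' n : ℤ, ((besselI n.natAbs x : ℝ) : ℂ) *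
        Complex.exp (((-((n : ℝ) * θ) : ℝ) : ℂ) * Complex.I) =
      Complex.exp ((x * Real.cos θ : ℝ)) := by
  have hx2 : 0 ≤ x / 2 := by positivity
  set u : ℂ := ((x / 2 : ℝ) : ℂ) * Complex.exp (((-θ : ℝ) : ℂ) * Complex.I) with hu
  set v : ℂ := ((x / 2 : ℝ) : ℂ) * Complex.exp (((θ : ℝ) : ℂ) * Complex.I) with hv
  set F : ℕ → ℂ := fun j => u ^ j / (Nat.factorial j : ℂ) with hF
  set G : ℕ → ℂ := fun k => v ^ k / (Nat.factorial k : ℂ) with hG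
  have hnu : ‖u‖ = x / 2 := by
    rw [hu, norm_mul, Complex.norm_real, Complex.norm_exp_ofReal_mul_I,
      mul_one, Real.norm_eq_abs, abs_of_nonneg hx2]
  have hnv : ‖v‖ = x / 2 := by
    rw [hv, norm_mul, Complex.norm_real, Complex.norm_exp_ofReal_mul_I,
      mul_one, Real.norm_eq_abs, abs_of_nonneg hx2]
  have hFn : ∀ j, ‖F j‖ = (x / 2) ^ j / (Nat.factorial j : ℝ) := by
    intro j
    rw [hF]
    simp [norm_div, norm_pow, hnu]
  have hGn : ∀ j, ‖G j‖ = (x / 2) ^ j / (Nat.factorial j : ℝ) := by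
    intro j
    rw [hG]
    simp [norm_div, norm_pow, hnv]
  have hFs : Summable fun j => ‖F j‖ :=
    (Real.summable_pow_div_factorial (x / 2)).congr fun j => (hFn j).symm
  have hGs : Summable fun j => ‖G j‖ :=
    (Real.summable_pow_div_factorial (x / 2)).congr fun j => (hGn j).symm
  have hFG : Summable fun p : ℕ × ℕ => ‖F p.1 * G p.2‖ := by
    refine (hFs.mul_of_nonneg hGs (fun j => norm_nonneg _) fun k => norm_nonneg _).congr
      fun p => ?_
    rw [norm_mul]
  -- product of the two exponential series
  have hexp : ∀ z : ℂ, Complex.exp z = ∑' n : ℕ, z ^ n / (Nat.factorial n : ℂ) := by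
    intro z
    rw [Complex.exp_eq_exp_ℂ, NormedSpace.exp_eq_tsum_div]
  have hprod : ∑' p : ℕ × ℕ, F p.1 * G p.2 = Complex.exp u * Complex.exp v := by
    rw [hexp u, hexp v, hF, hG]
    exact (tsum_mul_tsum_of_summable_norm hFs hGs).symm
  -- the ℤ × ℕ reindexing
  set H : ℤ × ℕ → ℂ := fun p => F (pairEquiv p).1 * G (pairEquiv p).2 with hH
  have hHn : Summable fun p : ℤ × ℕ => ‖H p‖ :=
    (pairEquiv.summable_iff (f := fun q : ℕ × ℕ => ‖F q.1 * G q.2‖)).mpr hFG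
  have hHsum : Summable H := hHn.of_norm
  have htsumH : ∑' p : ℤ × ℕ, H p = Complex.exp u * Complex.exp v := by
    rw [hH, ← hprod]
    exact pairEquiv.tsum_eq fun q : ℕ × ℕ => F q.1 * G q.2
  -- fiberwise sums
  have hpe : ∀ (m k : ℕ), pairEquiv ((m : ℤ), k) = (k + m, k) := by
    intro m k
    simp only [pairEquiv, Equiv.coe_fn_mk, Prod.mk.injEq]
    constructor <;> omega
  have hpe' : ∀ (m k : ℕ), pairEquiv ((-(m : ℤ)), k) = (k, k + m) := by
    intro m k
    simp only [pairEquiv, Equiv.coe_fn_mk, Prod.mk.injEq]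
    constructor <;> omega
  have hc : ∀ n : ℤ, ∑' k : ℕ, H (n, k)
      = ((besselI n.natAbs x : ℝ) : ℂ) * Complex.exp (((-((n : ℝ) * θ) : ℝ) : ℂ) * Complex.I) := by
    intro n
    obtain ⟨m, rfl | rfl⟩ := n.eq_nat_or_neg
    · have key := besselI_term_sum x (-θ) θ (by ring) m
      calc ∑' k : ℕ, H ((m : ℤ), k)
          = ∑' k : ℕ, (((x / 2 : ℝ) : ℂ) * Complex.exp (((-θ : ℝ) : ℂ) * Complex.I)) ^ (k + m) /
              (Nat.factorial (k + m) : ℂ) *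
            ((((x / 2 : ℝ) : ℂ) * Complex.exp (((θ : ℝ) : ℂ) * Complex.I)) ^ k /
              (Nat.factorial k : ℂ)) := by
            refine tsum_congr fun k => ?_
            rw [hH]
            simp only [hpe m k, hF, hG, hu, hv]
        _ = ((besselI m x : ℝ) : ℂ) * Complex.exp (((m : ℝ) * (-θ) : ℝ) * Complex.I) := key
        _ = ((besselI ((m : ℤ)).natAbs x : ℝ) : ℂ) *
              Complex.exp (((-(((m : ℤ) : ℝ) * θ) : ℝ) : ℂ) * Complex.I) := by
            rw [Int.natAbs_natCast]
            congr 2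
            push_cast
            ring
    · have key := besselI_term_sum x θ (-θ) (by ring) m
      calc ∑' k : ℕ, H ((-(m : ℤ)), k)
          = ∑' k : ℕ, (((x / 2 : ℝ) : ℂ) * Complex.exp (((θ : ℝ) : ℂ) * Complex.I)) ^ (k + m) /
              (Nat.factorial (k + m) : ℂ) *
            ((((x / 2 : ℝ) : ℂ) * Complex.exp (((-θ : ℝ) : ℂ) * Complex.I)) ^ k /
              (Nat.factorial k : ℂ)) := by
            refine tsum_congr fun k => ?_
            rw [hH]
            simp only [hpe' m k, hF, hG, hu, hv]
            ring
        _ = ((besselI m x : ℝ) : ℂ) * Complex.exp (((m : ℝ) * θ : ℝ) * Complex.I) := key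
        _ = ((besselI ((-(m : ℤ))).natAbs x : ℝ) : ℂ) *
              Complex.exp (((-((((-(m : ℤ)) : ℤ) : ℝ) * θ) : ℝ) : ℂ) * Complex.I) := by
            rw [Int.natAbs_neg, Int.natAbs_natCast]
            congr 2
            push_cast
            ring
  constructor
  · -- summability of the norms
    have hNs : Summable fun n : ℤ => ∑' k : ℕ, ‖H (n, k)‖ :=
      ((summable_prod_of_nonneg fun p => norm_nonneg _).mp hHn).2
    refine Summable.of_nonneg_of_le (fun n => norm_nonneg _) (fun n => ?_) hNs
    rw [← hc n]
    exact norm_tsum_le_tsum_norm (hHn.prod_factor n)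
  · -- the sum
    calc ∑' n : ℤ, ((besselI n.natAbs x : ℝ) : ℂ) *
          Complex.exp (((-((n : ℝ) * θ) : ℝ) : ℂ) * Complex.I)
        = ∑' n : ℤ, ∑' k : ℕ, H (n, k) := (tsum_congr fun n => (hc n).symm)
      _ = ∑' p : ℤ × ℕ, H p := (Summable.tsum_prod' hHsum fun n => hHsum.prod_factor n).symm
      _ = Complex.exp u * Complex.exp v := htsumH
      _ = Complex.exp ((x * Real.cos θ : ℝ)) := by
          rw [← Complex.exp_add, hu, hv]
          congr 1
          rw [Complex.exp_mul_I, Complex.exp_mul_I]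
          push_cast
          rw [Complex.cos_neg, Complex.sin_neg]
          ring

/-- Spectral representation of the squared exponential periodic kernel: for all real `a, t`,
the series `∑_{n ∈ ℤ} e^{−2a²} I_{|n|}(2a²) e^{−2πint}` converges absolutely and sums to
`exp(−4a² sin²(πt))`; i.e. `φ_a(t) = exp(−4a² sin²(πt))` is the Fourier transform of the
symmetric finite discrete measure placing mass `e^{−2a²} I_{|n|}(2a²)` at `2πn`, `n ∈ ℤ`. -/
theorem sep_kernel_spectral_measure (a t : ℝ) :
    Summable (fun n : ℤ =>
      ‖((Real.exp (-(2 * a ^ 2)) * besselI n.natAbs (2 * a ^ 2) : ℝ) : ℂ) *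
        Complex.exp (-(2 * π * n * t) * Complex.I)‖) ∧
    ∑' n : ℤ, ((Real.exp (-(2 * a ^ 2)) * besselI n.natAbs (2 * a ^ 2) : ℝ) : ℂ) *
        Complex.exp (-(2 * π * n * t) * Complex.I) =
      ((Real.exp (-(4 * a ^ 2 * Real.sin (π * t) ^ 2)) : ℝ) : ℂ) := by
  obtain ⟨hsum, htsum⟩ := main_aux (2 * a ^ 2) (2 * π * t) (by positivity)
  have harg : ∀ n : ℤ, (-(2 * (π : ℂ) * (n : ℂ) * (t : ℂ)) * Complex.I)
      = ((-((n : ℝ) * (2 * π * t)) : ℝ) : ℂ) * Complex.I := by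
    intro n
    push_cast
    ring
  have hterm : ∀ n : ℤ,
      ((Real.exp (-(2 * a ^ 2)) * besselI n.natAbs (2 * a ^ 2) : ℝ) : ℂ) *
        Complex.exp (-(2 * π * n * t) * Complex.I)
      = ((Real.exp (-(2 * a ^ 2)) : ℝ) : ℂ) *
        (((besselI n.natAbs (2 * a ^ 2) : ℝ) : ℂ) *
          Complex.exp (((-((n : ℝ) * (2 * π * t)) : ℝ) : ℂ) * Complex.I)) := by
    intro n
    rw [harg n]
    push_cast
    ring
  constructor
  · refine Summable.congr (hsum.mul_left (Real.exp (-(2 * a ^ 2)))) fun n => ?_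
    rw [hterm n]
    conv_rhs => rw [norm_mul, Complex.norm_real, Real.norm_eq_abs,
      abs_of_nonneg (Real.exp_nonneg (-(2 * a ^ 2)))]
  · calc ∑' n : ℤ, ((Real.exp (-(2 * a ^ 2)) * besselI n.natAbs (2 * a ^ 2) : ℝ) : ℂ) *
          Complex.exp (-(2 * π * n * t) * Complex.I)
        = ∑' n : ℤ, ((Real.exp (-(2 * a ^ 2)) : ℝ) : ℂ) *
            (((besselI n.natAbs (2 * a ^ 2) : ℝ) : ℂ) *
              Complex.exp (((-((n : ℝ) * (2 * π * t)) : ℝ) : ℂ) * Complex.I)) :=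
          tsum_congr hterm
      _ = ((Real.exp (-(2 * a ^ 2)) : ℝ) : ℂ) *
            ∑' n : ℤ, ((besselI n.natAbs (2 * a ^ 2) : ℝ) : ℂ) *
              Complex.exp (((-((n : ℝ) * (2 * π * t)) : ℝ) : ℂ) * Complex.I) := tsum_mul_left
      _ = ((Real.exp (-(2 * a ^ 2)) : ℝ) : ℂ) *
            Complex.exp ((2 * a ^ 2 * Real.cos (2 * π * t) : ℝ)) := by rw [htsum]
      _ = ((Real.exp (-(4 * a ^ 2 * Real.sin (π * t) ^ 2)) : ℝ) : ℂ) := by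
          rw [← Complex.ofReal_exp, ← Complex.ofReal_mul, ← Real.exp_add]
          congr 1
          have h2 : Real.cos (2 * π * t) = 1 - 2 * Real.sin (π * t) ^ 2 := by
            rw [show 2 * π * t = 2 * (π * t) by ring, Real.cos_two_mul]
            have := Real.sin_sq_add_cos_sq (π * t)
            linarith
          rw [h2]
          ring
end

section
/- For every real number a and all real numbers t, t′, the squared exponential periodic kernel admits the uniformly convergent eigen-expansion G_a(t, t′) = e^{−2a²} I_0(2a²) + 2 ∑_{n=1}^∞ e^{−2a²} I_n(2a²) cos(2πn(t − t′)); equivalently, the Fourier basis functions 1, cos 2πt, sin 2πt, cos 4πt, sin 4πt, … are eigenfunctions of the integral operator with kernel G_a on [0,1], with eigenvalues e^{−2a²} I_0(2a²), e^{−2a²} I_1(2a²), e^{−2a²} I_1(2a²), e^{−2a²} I_2(2a²), e^{−2a²} I_2(2a²), …. (Lemma 'spectral.measure' of the paper, second part: Karhunen–Loève expansion of the SEP kernel.) -/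
open Real

/-- The squared exponential periodic kernel with rescaling factor `a`. -/
noncomputable def sepKernel (a t₁ t₂ : ℝ) : ℝ :=
  Real.exp (-(4 * a ^ 2 * Real.sin (π * t₁ - π * t₂) ^ 2))

namespace SepKL
open Complex

def E : ℤ × ℕ ≃ ℕ × ℕ where
  toFun q := (q.2 + q.1.toNat, q.2 + (-q.1).toNat)
  invFun p := ((p.1 : ℤ) - p.2, min p.1 p.2)
  left_inv q := by
    obtain ⟨n, m⟩ := q
    refine Prod.ext ?_ ?_ <;> simp <;> omega
  right_inv p := by
    obtain ⟨j, k⟩ := p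
    refine Prod.ext ?_ ?_ <;> simp <;> omega

noncomputable def CF (c θ : ℝ) (p : ℕ × ℕ) : ℂ :=
  (↑c * Complex.exp (θ * I)) ^ p.1 / (Nat.factorial p.1) *
    ((↑c * Complex.exp (-θ * I)) ^ p.2 / (Nat.factorial p.2))

lemma norm_aux (c θ : ℝ) (hc : 0 ≤ c) : ‖(↑c * Complex.exp (↑θ * I))‖ = c := by
  rw [norm_mul, Complex.norm_exp_ofReal_mul_I, Complex.norm_real,
    Real.norm_of_nonneg hc, mul_one]

lemma norm_CF (c θ : ℝ) (hc : 0 ≤ c) (p : ℕ × ℕ) :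
    ‖CF c θ p‖ = c ^ p.1 / (Nat.factorial p.1) * (c ^ p.2 / (Nat.factorial p.2)) := by
  have h2 : ((-θ : ℝ) : ℂ) = -(θ : ℂ) := by push_cast; ring
  rw [CF, norm_mul, norm_div, norm_div, norm_pow, norm_pow, norm_aux c θ hc,
    ← h2, norm_aux c (-θ) hc]
  simp

lemma summable_norm_CF (c θ : ℝ) (hc : 0 ≤ c) : Summable fun p => ‖CF c θ p‖ := by
  have h := (Real.summable_pow_div_factorial c)
  have := h.mul_of_nonneg h (fun j => by positivity) (fun j => by positivity)
  exact (this.congr (fun p => (norm_CF c θ hc p).symm))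

lemma summable_CF (c θ : ℝ) (hc : 0 ≤ c) : Summable (CF c θ) :=
  (summable_norm_CF c θ hc).of_norm

lemma CF_pair (c θ : ℝ) (j k : ℕ) :
    CF c θ (j, k) = ↑(c ^ (j + k) / (Nat.factorial j * Nat.factorial k)) *
      Complex.exp (((j : ℂ) - k) * (θ * I)) := by
  have he : Complex.exp ((j : ℂ) * (↑θ * I)) * Complex.exp ((k : ℂ) * (-↑θ * I)) =
      Complex.exp (((j : ℂ) - k) * (θ * I)) := by
    rw [← Complex.exp_add]; congr 1; ring
  have h1 : (Nat.factorial j : ℂ) ≠ 0 := by exact_mod_cast (Nat.factorial_ne_zero j)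
  have h2 : (Nat.factorial k : ℂ) ≠ 0 := by exact_mod_cast (Nat.factorial_ne_zero k)
  rw [CF]
  simp only [mul_pow, ← Complex.exp_nat_mul]
  push_cast
  rw [← he]
  field_simp
  ring

lemma CF_E (c θ : ℝ) (n : ℤ) (m : ℕ) :
    CF c θ (E (n, m)) =
      ↑(c ^ (2 * m + n.natAbs) / (Nat.factorial m * Nat.factorial (m + n.natAbs))) *
        Complex.exp ((n : ℂ) * (θ * I)) := by
  have hE : E (n, m) = (m + n.toNat, m + (-n).toNat) := rfl
  rw [hE, CF_pair]
  have h1 : ((m + n.toNat : ℕ) : ℂ) - ((m + (-n).toNat : ℕ) : ℂ) = (n : ℂ) := by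
    have : ((m + n.toNat : ℕ) : ℤ) - ((m + (-n).toNat : ℕ) : ℤ) = n := by push_cast; omega
    exact_mod_cast this
  have h2 : (m + n.toNat) + (m + (-n).toNat) = 2 * m + n.natAbs := by omega
  have h3 : Nat.factorial (m + n.toNat) * Nat.factorial (m + (-n).toNat)
      = Nat.factorial m * Nat.factorial (m + n.natAbs) := by
    rcases le_or_gt 0 n with h | h
    · rw [show (-n).toNat = 0 by omega, show n.toNat = n.natAbs by omega]
      simp [mul_comm]
    · rw [show n.toNat = 0 by omega, show (-n).toNat = n.natAbs by omega]
      simp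
  rw [h1, h2,
    show ((m + n.toNat).factorial : ℝ) * ((m + (-n).toNat).factorial : ℝ)
        = (m.factorial : ℝ) * ((m + n.natAbs).factorial : ℝ) from by exact_mod_cast h3]

noncomputable def g (x θ : ℝ) (n : ℤ) : ℂ :=
  ↑(besselI n.natAbs x) * Complex.exp ((n : ℂ) * (θ * I))

lemma key (x θ : ℝ) (hx : 0 ≤ x) :
    Summable (fun n : ℕ => besselI (n + 1) x * Real.cos ((n + 1) * θ)) ∧
    Real.exp (x * Real.cos θ) =
      besselI 0 x + ∑' n : ℕ, 2 * (besselI (n + 1) x * Real.cos ((n + 1) * θ)) := by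
  set c : ℝ := x / 2 with hcdef
  have hc : 0 ≤ c := by positivity
  set z : ℂ := ↑c * Complex.exp (↑θ * I) with hzdef
  set w : ℂ := ↑c * Complex.exp (-↑θ * I) with hwdef
  -- step 1 : exp (x cos θ) = ∑ CF
  have hnz : Summable fun j : ℕ => ‖z ^ j / (Nat.factorial j : ℂ)‖ :=
    NormedSpace.norm_expSeries_div_summable z
  have hnw : Summable fun j : ℕ => ‖w ^ j / (Nat.factorial j : ℂ)‖ :=
    NormedSpace.norm_expSeries_div_summable w
  have hexpz : Complex.exp z = ∑' j : ℕ, z ^ j / (Nat.factorial j : ℂ) := by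
    rw [Complex.exp_eq_exp_ℂ, NormedSpace.exp_eq_tsum_div]
  have hexpw : Complex.exp w = ∑' j : ℕ, w ^ j / (Nat.factorial j : ℂ) := by
    rw [Complex.exp_eq_exp_ℂ, NormedSpace.exp_eq_tsum_div]
  have hzw : z + w = ((x * Real.cos θ : ℝ) : ℂ) := by
    rw [hzdef, hwdef, show (-↑θ * I : ℂ) = (-θ : ℝ) * I by push_cast; ring,
      Complex.exp_mul_I, Complex.exp_mul_I]
    push_cast
    rw [Complex.cos_neg, Complex.sin_neg, ← Complex.ofReal_cos]
    push_cast [hcdef]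
    ring
  have hstep1 : ((Real.exp (x * Real.cos θ) : ℝ) : ℂ) = ∑' p : ℕ × ℕ, CF c θ p := by
    rw [Complex.ofReal_exp, ← hzw, Complex.exp_add, hexpz, hexpw,
      tsum_mul_tsum_of_summable_norm hnz hnw]
    rfl
  -- step 2 : reindex over ℤ × ℕ and sum fibers
  have hCF : Summable (CF c θ) := summable_CF c θ hc
  have hCFE : Summable (CF c θ ∘ E) := E.summable_iff.mpr hCF
  have hfiber : ∀ n : ℤ, (∑' m : ℕ, CF c θ (E (n, m))) = g x θ n := by
    intro n
    rw [show (fun m : ℕ => CF c θ (E (n, m))) = fun m =>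
        ↑(c ^ (2 * m + n.natAbs) / (Nat.factorial m * Nat.factorial (m + n.natAbs))) *
          Complex.exp ((n : ℂ) * (θ * I)) from funext fun m => CF_E c θ n m]
    rw [tsum_mul_right, ← Complex.ofReal_tsum, g]
    norm_num [besselI, hcdef]
  have hg : Summable (g x θ) := by
    have := hCFE.prod
    exact this.congr hfiber
  have hstep2 : ((Real.exp (x * Real.cos θ) : ℝ) : ℂ) = ∑' n : ℤ, g x θ n := by
    rw [hstep1, ← E.tsum_eq (CF c θ)]
    have hp : ∑' q : ℤ × ℕ, CF c θ (E q) = ∑' (n : ℤ) (m : ℕ), CF c θ (E (n, m)) :=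
      Summable.tsum_prod' hCFE fun n => hCFE.prod_factor n
    rw [hp]
    exact tsum_congr hfiber
  -- step 3 : split the ℤ-sum
  have hinj1 : Function.Injective (fun n : ℕ => ((n : ℤ) + 1)) := fun a b h => by
    simpa using h
  have hinj2 : Function.Injective (fun n : ℕ => (-((n : ℤ) + 1))) := fun a b h => by
    simpa using h
  have hs1 : Summable fun n : ℕ => g x θ ((n : ℤ) + 1) := by
    apply hg.comp_injective hinj1
  have hs2 : Summable fun n : ℕ => g x θ (-((n : ℤ) + 1)) := by
    apply hg.comp_injective hinj2
  have hsplit : ∑' n : ℤ, g x θ n =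
      (∑' n : ℕ, g x θ ((n : ℤ) + 1)) + g x θ 0 + ∑' n : ℕ, g x θ (-((n : ℤ) + 1)) :=
    tsum_of_add_one_of_neg_add_one hs1 hs2
  have hpair : ∀ n : ℕ, g x θ ((n : ℤ) + 1) + g x θ (-((n : ℤ) + 1)) =
      ↑(2 * (besselI (n + 1) x * Real.cos ((n + 1) * θ))) := by
    intro n
    have h1 : ((n : ℤ) + 1).natAbs = n + 1 := by omega
    have h2 : (-((n : ℤ) + 1)).natAbs = n + 1 := by omega
    have hcos : Complex.exp ((((n : ℤ) + 1 : ℤ) : ℂ) * (↑θ * I)) +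
        Complex.exp (((-((n : ℤ) + 1) : ℤ) : ℂ) * (↑θ * I)) =
        2 * Complex.cos ((((n : ℝ) + 1) * θ : ℝ)) := by
      rw [Complex.cos]
      push_cast
      rw [show (-((n : ℂ) + 1)) * (↑θ * I) = -((((n : ℂ) + 1) * θ) * I) by ring,
        show ((n : ℂ) + 1) * (↑θ * I) = (((n : ℂ) + 1) * θ) * I by ring]
      ring
    rw [g, g, h1, h2, ← mul_add, hcos, ← Complex.ofReal_cos]
    push_cast
    ring
  have hsr : Summable (fun n : ℕ => besselI (n + 1) x * Real.cos ((n + 1) * θ)) := by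
    have h := (hs1.add hs2).congr hpair
    rw [Complex.summable_ofReal] at h
    have h2 := h.div_const 2
    exact h2.congr fun n => by ring
  refine ⟨hsr, ?_⟩
  have final : ((Real.exp (x * Real.cos θ) : ℝ) : ℂ) =
      ((besselI 0 x + ∑' n : ℕ, 2 * (besselI (n + 1) x * Real.cos ((n + 1) * θ)) : ℝ) : ℂ) := by
    rw [hstep2, hsplit]
    have hg0 : g x θ 0 = ((besselI 0 x : ℝ) : ℂ) := by
      simp [g]
    rw [show (∑' n : ℕ, g x θ ((n : ℤ) + 1)) + g x θ 0 + ∑' n : ℕ, g x θ (-((n : ℤ) + 1))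
        = g x θ 0 + ((∑' n : ℕ, g x θ ((n : ℤ) + 1)) + ∑' n : ℕ, g x θ (-((n : ℤ) + 1))) by ring,
      ← Summable.tsum_add hs1 hs2, hg0, Complex.ofReal_add]
    congr 1
    rw [Complex.ofReal_tsum]
    exact tsum_congr hpair
  exact_mod_cast final

end SepKL

/-- Karhunen–Loève (eigen-)expansion of the SEP kernel: for every real `a` and all `t, t′`,
`G_a(t, t′) = e^{−2a²} I_0(2a²) + 2 ∑_{n=1}^∞ e^{−2a²} I_n(2a²) cos(2πn(t − t′))`, the
series converging (indeed the majorizing eigenvalue series converges, so the convergence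
is uniform in `t, t′`); i.e. the Fourier basis functions are eigenfunctions of the integral
operator with kernel `G_a` on `[0,1]`, with eigenvalues `e^{−2a²} I_n(2a²)` (each of the
eigenvalues for `n ≥ 1` appearing twice, for the cosine and the sine eigenfunction). -/
theorem sep_kernel_karhunen_loeve (a : ℝ) :
    Summable (fun n : ℕ => Real.exp (-(2 * a ^ 2)) * besselI (n + 1) (2 * a ^ 2)) ∧
    ∀ t t' : ℝ,
      sepKernel a t t' =
        Real.exp (-(2 * a ^ 2)) * besselI 0 (2 * a ^ 2) +
          2 * ∑' n : ℕ, Real.exp (-(2 * a ^ 2)) * besselI (n + 1) (2 * a ^ 2) *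
            Real.cos (2 * π * (n + 1) * (t - t')) := by
  have hx : (0:ℝ) ≤ 2 * a ^ 2 := by positivity
  constructor
  · have h := (SepKL.key (2 * a ^ 2) 0 hx).1
    simp only [mul_zero, Real.cos_zero, mul_one] at h
    exact h.mul_left _
  · intro t t'
    obtain ⟨hs, heq⟩ := SepKL.key (2 * a ^ 2) (2 * π * (t - t')) hx
    have hker : sepKernel a t t' =
        Real.exp (-(2 * a ^ 2)) * Real.exp ((2 * a ^ 2) * Real.cos (2 * π * (t - t'))) := by
      rw [sepKernel, ← Real.exp_add]
      congr 1
      have h1 : Real.cos (2 * π * (t - t')) = 1 - 2 * Real.sin (π * t - π * t') ^ 2 := by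
        rw [show 2 * π * (t - t') = 2 * (π * t - π * t') by ring, Real.cos_two_mul,
          ← Real.sin_sq_add_cos_sq (π * t - π * t')]
        ring
      rw [h1]; ring
    rw [hker, heq, mul_add]
    congr 1
    rw [← tsum_mul_left, ← tsum_mul_left]
    exact tsum_congr fun n => by
      rw [show ((n : ℝ) + 1) * (2 * π * (t - t')) = 2 * π * ((n : ℝ) + 1) * (t - t') by ring]
      ring
end

section
/- For every real number a, the spectral measure of the squared exponential periodic kernel has subexponential tails: the series ∑_{n∈ℤ} e^{2π|n|} e^{−2a²} I_{|n|}(2a²) converges and is bounded above by 2 exp(a²(e^{2π} + e^{−2π} − 2)). (Tail bound established in Section 4 of the paper.) -/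
open Real

lemma exp_tsum (y : ℝ) : Real.exp y = ∑' n : ℕ, y ^ n / n.factorial := by
  rw [Real.exp_eq_exp_ℝ, NormedSpace.exp_eq_tsum_div]

lemma besselI_nonneg (n : ℕ) {x : ℝ} (hx : 0 ≤ x) : 0 ≤ besselI n x := by
  refine tsum_nonneg fun j => ?_
  have h2 : (0:ℝ) ≤ x / 2 := by linarith
  positivity

set_option maxHeartbeats 1000000 in
/-- Subexponential tails of the spectral measure of the SEP kernel: for every real `a`,
`∑_{n ∈ ℤ} e^{2π|n|} e^{−2a²} I_{|n|}(2a²)` converges and is at most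
`2 exp(a²(e^{2π} + e^{−2π} − 2))`. -/
theorem sep_spectral_measure_subexponential_tail (a : ℝ) :
    Summable (fun n : ℤ =>
      Real.exp (2 * π * |(n : ℝ)|) * (Real.exp (-(2 * a ^ 2)) * besselI n.natAbs (2 * a ^ 2))) ∧
    ∑' n : ℤ, Real.exp (2 * π * |(n : ℝ)|) *
        (Real.exp (-(2 * a ^ 2)) * besselI n.natAbs (2 * a ^ 2)) ≤
      2 * Real.exp (a ^ 2 * (Real.exp (2 * π) + Real.exp (-(2 * π)) - 2)) := by
  set x : ℝ := 2 * a ^ 2 with hxdef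
  have hx : 0 ≤ x := by positivity
  set t : ℝ := 2 * π with htdef
  -- the two factor sequences
  set A : ℕ → ℝ := fun j => (x * Real.exp (-t) / 2) ^ j / j.factorial with hAdef
  set B : ℕ → ℝ := fun k => (x * Real.exp t / 2) ^ k / k.factorial with hBdef
  have hA : Summable A := Real.summable_pow_div_factorial _
  have hB : Summable B := Real.summable_pow_div_factorial _
  have hA0 : ∀ j, 0 ≤ A j := fun j => by
    have : (0:ℝ) ≤ x * Real.exp (-t) / 2 := by positivity
    simp only [hAdef]; positivity
  have hB0 : ∀ k, 0 ≤ B k := fun k => by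
    have : (0:ℝ) ≤ x * Real.exp t / 2 := by positivity
    simp only [hBdef]; positivity
  have hAsum : ∑' j, A j = Real.exp (x * Real.exp (-t) / 2) := (exp_tsum _).symm
  have hBsum : ∑' k, B k = Real.exp (x * Real.exp t / 2) := (exp_tsum _).symm
  have hG : Summable (fun p : ℕ × ℕ => A p.1 * B p.2) :=
    hA.mul_of_nonneg hB hA0 hB0
  have hG0 : ∀ p : ℕ × ℕ, 0 ≤ A p.1 * B p.2 := fun p => mul_nonneg (hA0 _) (hB0 _)
  -- the injection (n, j) ↦ (j, j + n)
  have hφinj : Function.Injective (fun p : ℕ × ℕ => (p.2, p.2 + p.1)) := by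
    rintro ⟨n, j⟩ ⟨n', j'⟩ h
    simp only [Prod.mk.injEq] at h
    obtain ⟨h1, h2⟩ := h
    subst h1
    have : n = n' := by omega
    subst this
    rfl
  have hF0 : Summable ((fun p : ℕ × ℕ => A p.1 * B p.2) ∘
      fun p : ℕ × ℕ => (p.2, p.2 + p.1)) := hG.comp_injective hφinj
  have hF : Summable (fun p : ℕ × ℕ => A p.2 * B (p.2 + p.1)) :=
    hF0.congr fun p => rfl
  -- the key pointwise identity
  have hterm : ∀ n j : ℕ, A j * B (j + n) =
      Real.exp (t * n) * ((x / 2) ^ (2 * j + n) /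
        ((Nat.factorial j : ℝ) * (Nat.factorial (j + n) : ℝ))) := by
    intro n j
    have hy : Real.exp t ≠ 0 := Real.exp_ne_zero t
    have hfj : (Nat.factorial j : ℝ) ≠ 0 := by positivity
    have hfjn : (Nat.factorial (j + n) : ℝ) ≠ 0 := by positivity
    simp only [hAdef, hBdef]
    rw [Real.exp_neg, show x * (Real.exp t)⁻¹ / 2 = (x / 2) * (Real.exp t)⁻¹ by ring,
      show x * Real.exp t / 2 = (x / 2) * Real.exp t by ring,
      mul_pow, mul_pow, show 2 * j + n = j + (j + n) by ring, pow_add,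
      show Real.exp (t * n) = Real.exp t ^ n by
        rw [← Real.exp_nat_mul]; ring_nf,
      show j + n = j + n from rfl, pow_add (Real.exp t) j n, inv_pow]
    field_simp
    ring
  -- fiberwise summability
  have hfiber : ∀ n : ℕ, Summable (fun j : ℕ => A j * B (j + n)) := by
    intro n
    have h0 : Summable ((fun p : ℕ × ℕ => A p.1 * B p.2) ∘ fun j : ℕ => (j, j + n)) :=
      hG.comp_injective fun j j' h => congrArg Prod.fst h
    exact h0.congr fun j => rfl
  -- the ℕ-indexed sequence and its sum
  have hfibsum : ∀ n : ℕ, HasSum (fun j : ℕ => A j * B (j + n))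
      (Real.exp (t * n) * besselI n x) := by
    intro n
    have h1 : (fun j : ℕ => A j * B (j + n)) = fun j : ℕ =>
        Real.exp (t * n) * ((x / 2) ^ (2 * j + n) /
          ((Nat.factorial j : ℝ) * (Nat.factorial (j + n) : ℝ))) := by
      funext j; exact hterm n j
    rw [h1]
    have hs : Summable (fun j : ℕ => (x / 2) ^ (2 * j + n) /
        ((Nat.factorial j : ℝ) * (Nat.factorial (j + n) : ℝ))) := by
      have h2 := (hfiber n)
      rw [h1] at h2
      exact (summable_mul_left_iff (Real.exp_ne_zero _)).mp h2
    exact (hs.hasSum.mul_left _)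
  have hN : HasSum (fun n : ℕ => Real.exp (t * n) * besselI n x)
      (∑' p : ℕ × ℕ, A p.2 * B (p.2 + p.1)) :=
    hF.hasSum.prod_fiberwise fun n => hfibsum n
  -- bound the double sum
  have hFG : ∑' p : ℕ × ℕ, A p.2 * B (p.2 + p.1) ≤
      Real.exp (x * Real.exp (-t) / 2) * Real.exp (x * Real.exp t / 2) := by
    calc ∑' p : ℕ × ℕ, A p.2 * B (p.2 + p.1)
        ≤ ∑' p : ℕ × ℕ, A p.1 * B p.2 :=
          hF.tsum_le_tsum_of_inj _ hφinj (fun c _ => hG0 c) (fun p => le_rfl) hG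
      _ = (∑' j, A j) * ∑' k, B k := (Summable.tsum_mul_tsum hA hB hG).symm
      _ = _ := by rw [hAsum, hBsum]
  have hg0 : ∀ n : ℕ, 0 ≤ Real.exp (t * n) * besselI n x := fun n =>
    mul_nonneg (Real.exp_pos _).le (besselI_nonneg n hx)
  -- assemble: the ℤ-indexed function
  set h : ℤ → ℝ := fun n => Real.exp (t * |(n : ℝ)|) *
      (Real.exp (-x) * besselI n.natAbs x) with hhdef
  have habs : ∀ n : ℤ, h n = Real.exp (-x) * (Real.exp (t * n.natAbs) * besselI n.natAbs x) := by
    intro n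
    have : ((n.natAbs : ℝ)) = |(n : ℝ)| := by push_cast [Nat.cast_natAbs]; rfl
    simp only [hhdef, ← this]
    ring
  have hNsummable : Summable (fun n : ℕ => Real.exp (t * n) * besselI n x) := hN.summable
  have hnat : Summable (fun n : ℕ => h n) := by
    have : (fun n : ℕ => h n) = fun n : ℕ =>
        Real.exp (-x) * (Real.exp (t * n) * besselI n x) := by
      funext n; rw [habs]; simp
    rw [this]; exact hNsummable.mul_left _
  have hnab : ∀ n : ℕ, ((-(n+1) : ℤ)).natAbs = n + 1 := fun n => by omega
  have hsucc : Function.Injective (fun n : ℕ => n + 1) := fun a b hab => by simpa using hab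
  have hneg : Summable (fun n : ℕ => h (-(n + 1))) := by
    have heq : (fun n : ℕ => h (-(n + 1))) = fun n : ℕ =>
        Real.exp (-x) * (Real.exp (t * ((n + 1 : ℕ) : ℝ)) * besselI (n + 1) x) := by
      funext n; rw [habs, hnab n]
    rw [heq]
    exact ((hNsummable.mul_left (Real.exp (-x))).comp_injective
      (i := fun n : ℕ => n + 1) hsucc).congr fun n => rfl
  have hsummableZ : Summable h := Summable.of_nat_of_neg_add_one hnat hneg
  refine ⟨hsummableZ, ?_⟩
  have hsplit : ∑' n : ℤ, h n = (∑' n : ℕ, h n) + ∑' n : ℕ, h (-(n + 1)) :=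
    tsum_of_nat_of_neg_add_one hnat hneg
  have hle1 : ∑' n : ℕ, h (-(n + 1)) ≤ ∑' n : ℕ, h n := by
    refine hneg.tsum_le_tsum_of_inj (fun n => n + 1) hsucc
      (fun c _ => ?_) (fun n => le_of_eq ?_) hnat
    · rw [habs]; exact mul_nonneg (Real.exp_pos _).le (hg0 _)
    · rw [habs, habs, hnab n]
      have h2 : ((((n + 1 : ℕ)) : ℤ)).natAbs = n + 1 := by omega
      rw [h2]
  have hNle : ∑' n : ℕ, h n ≤ Real.exp (-x) *
      (Real.exp (x * Real.exp (-t) / 2) * Real.exp (x * Real.exp t / 2)) := by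
    have : (fun n : ℕ => h n) = fun n : ℕ =>
        Real.exp (-x) * (Real.exp (t * n) * besselI n x) := by
      funext n; rw [habs]; simp
    rw [this, tsum_mul_left, hN.tsum_eq]
    exact mul_le_mul_of_nonneg_left hFG (Real.exp_pos _).le
  have hfinal : 2 * (Real.exp (-x) *
      (Real.exp (x * Real.exp (-t) / 2) * Real.exp (x * Real.exp t / 2))) =
      2 * Real.exp (a ^ 2 * (Real.exp (2 * π) + Real.exp (-(2 * π)) - 2)) := by
    rw [← Real.exp_add, ← Real.exp_add]
    congr 1
    rw [hxdef, htdef]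
    ring
  calc ∑' n : ℤ, h n = (∑' n : ℕ, h n) + ∑' n : ℕ, h (-(n + 1)) := hsplit
    _ ≤ (∑' n : ℕ, h n) + ∑' n : ℕ, h n := by linarith
    _ = 2 * ∑' n : ℕ, h n := by ring
    _ ≤ 2 * (Real.exp (-x) *
        (Real.exp (x * Real.exp (-t) / 2) * Real.exp (x * Real.exp t / 2))) := by linarith
    _ = _ := hfinal
end

section
/- For every integer j ≥ 1, one has 8^{−j} · √((4j)!/(2j)!) / j! ≤ √e · 2^{1/4} · (2π)^{−3/4}. (Uniform bound on the rescaled spectral moments used in the entropy estimate, Lemma 'entropy.lambda', of the paper; proved via the two-sided Stirling bounds √(2π) n^{n+1/2} e^{−n} ≤ n! ≤ e n^{n+1/2} e^{−n}.) -/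
open Real

noncomputable def gq (j : ℕ) : ℝ :=
  (Nat.factorial (4 * j) : ℝ) / ((64:ℝ) ^ j * (Nat.factorial (2 * j)) * (Nat.factorial j) ^ 2)

lemma gq_succ_le (j : ℕ) : gq (j + 1) ≤ gq j := by
  have e4 : 4 * (j + 1) = 4 * j + 1 + 1 + 1 + 1 := by ring
  have e2 : 2 * (j + 1) = 2 * j + 1 + 1 := by ring
  have hA4 : ((Nat.factorial (4 * j + 1 + 1 + 1 + 1) : ℝ)) =
      ((4*j:ℝ)+4) * ((4*j:ℝ)+3) * ((4*j:ℝ)+2) * ((4*j:ℝ)+1) * (Nat.factorial (4*j) : ℝ) := by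
    push_cast [Nat.factorial_succ]; ring
  have hB2 : ((Nat.factorial (2 * j + 1 + 1) : ℝ)) =
      ((2*j:ℝ)+2) * ((2*j:ℝ)+1) * (Nat.factorial (2*j) : ℝ) := by
    push_cast [Nat.factorial_succ]; ring
  have hC1 : ((Nat.factorial (j + 1) : ℝ)) = ((j:ℝ)+1) * (Nat.factorial j : ℝ) := by
    push_cast [Nat.factorial_succ]; ring
  rw [gq, gq, e4, e2, div_le_div_iff₀ (by positivity) (by positivity), hA4, hB2, hC1]
  have key : ((4*j:ℝ)+4) * ((4*j:ℝ)+3) * ((4*j:ℝ)+2) * ((4*j:ℝ)+1)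
      ≤ 64 * (((2*j:ℝ)+2) * ((2*j:ℝ)+1)) * ((j:ℝ)+1)^2 := by
    nlinarith [sq_nonneg (j:ℝ), (Nat.cast_nonneg j : (0:ℝ) ≤ j)]
  calc ((4*j:ℝ)+4) * ((4*j:ℝ)+3) * ((4*j:ℝ)+2) * ((4*j:ℝ)+1) * (Nat.factorial (4*j) : ℝ) * ((64:ℝ)^j * (Nat.factorial (2*j):ℝ) * (Nat.factorial j:ℝ)^2)
      = (((4*j:ℝ)+4) * ((4*j:ℝ)+3) * ((4*j:ℝ)+2) * ((4*j:ℝ)+1)) * ((Nat.factorial (4*j):ℝ) * ((64:ℝ)^j * (Nat.factorial (2*j):ℝ) * (Nat.factorial j:ℝ)^2)) := by ring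
    _ ≤ (64 * (((2*j:ℝ)+2) * ((2*j:ℝ)+1)) * ((j:ℝ)+1)^2) * ((Nat.factorial (4*j):ℝ) * ((64:ℝ)^j * (Nat.factorial (2*j):ℝ) * (Nat.factorial j:ℝ)^2)) :=
        mul_le_mul_of_nonneg_right key (by positivity)
    _ = (Nat.factorial (4*j):ℝ) * ((64:ℝ)^(j+1) * (((2*j:ℝ)+2) * ((2*j:ℝ)+1) * (Nat.factorial (2*j):ℝ)) * ((((j:ℝ)+1) * (Nat.factorial j:ℝ)))^2) := by ring

lemma gq_le (j : ℕ) (hj : 1 ≤ j) : gq j ≤ 3/16 := by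
  have h1 : gq 1 = 3/16 := by norm_num [gq, Nat.factorial]
  rw [← h1]
  induction j with
  | zero => omega
  | succ n ih =>
    rcases Nat.eq_or_lt_of_le hj with h | h
    · simp [← h]
    · exact (gq_succ_le n).trans (ih (by omega))

/-- Uniform bound on the rescaled spectral moments used in the entropy estimate:
for every integer `j ≥ 1`, `8^{−j} √((4j)!/(2j)!) / j! ≤ √e · 2^{1/4} · (2π)^{−3/4}`. -/
theorem rescaled_moment_uniform_bound (j : ℕ) (hj : 1 ≤ j) :
    (8 : ℝ) ^ (-(j : ℤ)) *
        Real.sqrt ((Nat.factorial (4 * j) : ℝ) / (Nat.factorial (2 * j) : ℝ)) /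
        (Nat.factorial j : ℝ) ≤
      Real.sqrt (Real.exp 1) * (2 : ℝ) ^ ((1 : ℝ) / 4) * (2 * π) ^ (-(3 : ℝ) / 4) := by
  have hB : (0:ℝ) < (Nat.factorial (2 * j) : ℝ) := by positivity
  have hC : (0:ℝ) < (Nat.factorial j : ℝ) := by positivity
  have h8 : (0:ℝ) < (8:ℝ) ^ j := by positivity
  have hz : (8:ℝ) ^ (-(j:ℤ)) = ((8:ℝ)^j)⁻¹ := by rw [zpow_neg, zpow_natCast]
  have hgq : gq j = ((Nat.factorial (4 * j) : ℝ) / (Nat.factorial (2 * j) : ℝ)) /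
      ((8:ℝ)^j * (Nat.factorial j : ℝ))^2 := by
    rw [gq, mul_pow, show ((8:ℝ)^j)^2 = (64:ℝ)^j by
      rw [← pow_mul, mul_comm, pow_mul]; norm_num, div_div]
    congr 1
    ring
  have hL : (8 : ℝ) ^ (-(j : ℤ)) *
        Real.sqrt ((Nat.factorial (4 * j) : ℝ) / (Nat.factorial (2 * j) : ℝ)) /
        (Nat.factorial j : ℝ) = Real.sqrt (gq j) := by
    have hd : Real.sqrt (((Nat.factorial (4 * j) : ℝ) / (Nat.factorial (2 * j) : ℝ)) /
        ((8:ℝ)^j * (Nat.factorial j : ℝ))^2)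
        = Real.sqrt ((Nat.factorial (4 * j) : ℝ) / (Nat.factorial (2 * j) : ℝ)) /
          Real.sqrt (((8:ℝ)^j * (Nat.factorial j : ℝ))^2) :=
      Real.sqrt_div (by positivity) _
    rw [hgq, hd, Real.sqrt_sq (by positivity), hz]
    field_simp
  rw [hL]
  refine (Real.sqrt_le_sqrt (gq_le j hj)).trans ?_
  have hpi := Real.pi_pos
  have hRpos : (0:ℝ) ≤ Real.sqrt (Real.exp 1) * (2 : ℝ) ^ ((1 : ℝ) / 4) * (2 * π) ^ (-(3 : ℝ) / 4) := by
    positivity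
  have h2pi : (0:ℝ) < 2 * π := by linarith
  have hsq : (Real.sqrt (Real.exp 1) * (2 : ℝ) ^ ((1 : ℝ) / 4) * (2 * π) ^ (-(3 : ℝ) / 4))^2
      = Real.exp 1 * (2:ℝ) ^ ((1:ℝ)/2) * (2*π) ^ (-(3:ℝ)/2) := by
    rw [mul_pow, mul_pow, Real.sq_sqrt (Real.exp_pos 1).le,
      ← Real.rpow_natCast ((2:ℝ) ^ ((1:ℝ)/4)) 2, ← Real.rpow_mul (by norm_num),
      ← Real.rpow_natCast ((2*π) ^ (-(3:ℝ)/4)) 2, ← Real.rpow_mul h2pi.le]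
    norm_num
  have hnum : (3:ℝ)/16 ≤ Real.exp 1 * (2:ℝ) ^ ((1:ℝ)/2) * (2*π) ^ (-(3:ℝ)/2) := by
    rw [show (-(3:ℝ)/2) = -(3/2) by norm_num, Real.rpow_neg h2pi.le,
      show ((3:ℝ)/2) = 1 + 1/2 by norm_num, Real.rpow_add h2pi, Real.rpow_one,
      ← Real.sqrt_eq_rpow, ← Real.sqrt_eq_rpow, ← div_eq_mul_inv, le_div_iff₀ (by positivity)]
    have hs2pi : Real.sqrt (2*π) ≤ 2.52 := by
      rw [show (2.52:ℝ) = Real.sqrt (2.52^2) by rw [Real.sqrt_sq]; norm_num]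
      exact Real.sqrt_le_sqrt (by nlinarith [Real.pi_lt_d2])
    have hs2 : (1.414:ℝ) ≤ Real.sqrt 2 := by
      rw [show (1.414:ℝ) = Real.sqrt (1.414^2) by rw [Real.sqrt_sq]; norm_num]
      exact Real.sqrt_le_sqrt (by norm_num)
    have he : (2.7182818283:ℝ) < Real.exp 1 := Real.exp_one_gt_d9
    nlinarith [Real.sqrt_nonneg (2*π), Real.pi_lt_d2, Real.sqrt_nonneg 2]
  calc Real.sqrt (3/16)
      ≤ Real.sqrt ((Real.sqrt (Real.exp 1) * (2 : ℝ) ^ ((1 : ℝ) / 4) * (2 * π) ^ (-(3 : ℝ) / 4))^2) := by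
        rw [hsq]; exact Real.sqrt_le_sqrt hnum
    _ = _ := Real.sqrt_sq hRpos
end
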